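/- arXiv:2407.18983 — 3 statements merged into one kernel-verified Lean document; each statement's English description precedes it below -/
import Mathlib

section
/- There exist a constant C > 0 and a real number x₀ ≥ e² such that for all real x ≥ x₀, |π(x/e) − ψ(x/e)/(log x − 1)| ≤ C·(x/e)/(log x − 1)². -/
open Real Finset

section Aux
open ArithmeticFunction

private lemma theta_le' (N : ℕ) :
    ∑ p ∈ (N+1).primesBelow, Real.log p ≤ N * Real.log 4 := by
  have h1 : ∑ p ∈ (N+1).primesBelow, Real.log p = Real.log (primorial N) := by
    rw [primorial, Nat.cast_prod, Real.log_prod]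
    · rfl
    · intro p hp
      exact_mod_cast (Nat.prime_of_mem_primesBelow hp).pos.ne'
  rw [h1]
  calc Real.log (primorial N) ≤ Real.log ((4:ℝ)^N) := by
        apply Real.log_le_log (by exact_mod_cast (primorial_pos N))
        exact_mod_cast primorial_le_4_pow N
    _ = N * Real.log 4 := by rw [Real.log_pow]

private lemma pi_eq_card' (n : ℕ) : Nat.primeCounting n = ((n+1).primesBelow).card := by
  rw [Nat.primesBelow_card_eq_primeCounting', Nat.primeCounting]

private lemma cheb' (n : ℕ) (hn : 1 ≤ n) :
    (Nat.primeCounting n : ℝ) * Real.log n ≤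
      (Nat.sqrt n + 1) * Real.log n + 2 * Real.log 4 * n := by
  classical
  set P := (n+1).primesBelow with hP
  set s := Nat.sqrt n + 1 with hs
  have hlogn : (0:ℝ) ≤ Real.log n := Real.log_natCast_nonneg n
  have key : (Nat.primeCounting n : ℝ) * Real.log n = ∑ p ∈ P, Real.log n := by
    rw [Finset.sum_const, pi_eq_card', nsmul_eq_mul]
  rw [key, ← Finset.sum_filter_add_sum_filter_not P (fun p => p < s)]
  have h1 : ∑ p ∈ P.filter (fun p => p < s), Real.log n ≤ s * Real.log n := by
    rw [Finset.sum_const, nsmul_eq_mul]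
    apply mul_le_mul_of_nonneg_right _ hlogn
    have : P.filter (fun p => p < s) ⊆ Finset.range s := fun p hp =>
      Finset.mem_range.mpr (Finset.mem_filter.mp hp).2
    exact_mod_cast Finset.card_le_card this |>.trans (by simp)
  have h2 : ∑ p ∈ P.filter (fun p => ¬ p < s), Real.log n ≤ 2 * Real.log 4 * n := by
    have hb : ∀ p ∈ P.filter (fun p => ¬ p < s), Real.log n ≤ 2 * Real.log p := by
      intro p hp
      rw [Finset.mem_filter, not_lt] at hp
      have hp2 : (n:ℝ) ≤ (p:ℝ)^2 := by
        have h0 : n < s ^ 2 := Nat.lt_succ_sqrt' n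
        have : n ≤ p ^ 2 := le_trans h0.le (Nat.pow_le_pow_left hp.2 2)
        exact_mod_cast this
      calc Real.log n ≤ Real.log ((p:ℝ)^2) := by
            apply Real.log_le_log (by exact_mod_cast hn) hp2
        _ = 2 * Real.log p := by rw [Real.log_pow]; push_cast; ring
    calc ∑ p ∈ P.filter (fun p => ¬ p < s), Real.log n
        ≤ ∑ p ∈ P.filter (fun p => ¬ p < s), 2 * Real.log p := Finset.sum_le_sum hb
      _ = 2 * ∑ p ∈ P.filter (fun p => ¬ p < s), Real.log p := by rw [Finset.mul_sum]
      _ ≤ 2 * ∑ p ∈ P, Real.log p := by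
          apply mul_le_mul_of_nonneg_left _ (by norm_num)
          apply Finset.sum_le_sum_of_subset_of_nonneg (Finset.filter_subset _ _)
          intro p hp _
          exact Real.log_nonneg (by exact_mod_cast (Nat.prime_of_mem_primesBelow hp).one_lt.le)
      _ ≤ 2 * (n * Real.log 4) := by
          apply mul_le_mul_of_nonneg_left _ (by norm_num)
          exact theta_le' n
      _ = 2 * Real.log 4 * n := by ring
  calc _ ≤ s * Real.log n + 2 * Real.log 4 * n := add_le_add h1 h2
    _ = (Nat.sqrt n + 1) * Real.log n + 2 * Real.log 4 * n := by
        rw [hs]; push_cast; ring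

private lemma Abound' (N : ℕ) :
    ∑ p ∈ (N+1).primesBelow, (Real.log (N+1) - Real.log p) ≤
      ∑ n ∈ Finset.range (N+1), (Nat.primeCounting n : ℝ) / n := by
  classical
  have step1 : ∀ p ∈ (N+1).primesBelow,
      Real.log (N+1) - Real.log p ≤ ∑ n ∈ Finset.Ico p (N+1), (1:ℝ)/n := by
    intro p hp
    rw [Nat.mem_primesBelow] at hp
    have hple : p ≤ N + 1 := hp.1.le
    have tel : ∑ n ∈ Finset.Ico p (N+1),
          ((fun k : ℕ => Real.log k) (n+1) - (fun k : ℕ => Real.log k) n)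
        = Real.log ((N+1 : ℕ) : ℝ) - Real.log p := by
      rw [Finset.sum_Ico_eq_sub _ hple, Finset.sum_range_sub (fun k : ℕ => Real.log k),
        Finset.sum_range_sub (fun k : ℕ => Real.log k)]
      simp
    simp only [Nat.cast_add, Nat.cast_one] at tel
    rw [← tel]
    apply Finset.sum_le_sum
    intro n hn
    have hn2 : 2 ≤ n := le_trans hp.2.two_le (Finset.mem_Ico.mp hn).1
    have hnpos : (0:ℝ) < n := by exact_mod_cast hn2.trans_lt' (by norm_num)
    have heq : Real.log ((n : ℝ)+1) - Real.log n = Real.log (((n:ℝ)+1)/n) := by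
      rw [Real.log_div (by positivity) hnpos.ne']
    rw [heq]
    calc Real.log (((n:ℝ)+1)/n) ≤ ((n:ℝ)+1)/n - 1 :=
          Real.log_le_sub_one_of_pos (by positivity)
      _ = 1/n := by field_simp; ring
  calc ∑ p ∈ (N+1).primesBelow, (Real.log (N+1) - Real.log p)
      ≤ ∑ p ∈ (N+1).primesBelow, ∑ n ∈ Finset.Ico p (N+1), (1:ℝ)/n :=
        Finset.sum_le_sum step1
    _ = ∑ n ∈ Finset.range (N+1), ∑ p ∈ ((N+1).primesBelow).filter (· ≤ n), (1:ℝ)/n := by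
        apply Finset.sum_comm'
        intro p n
        simp only [Nat.mem_primesBelow, Finset.mem_Ico, Finset.mem_filter, Finset.mem_range]
        tauto
    _ ≤ ∑ n ∈ Finset.range (N+1), (Nat.primeCounting n : ℝ) / n := by
        apply Finset.sum_le_sum
        intro n hn
        rw [Finset.sum_const, nsmul_eq_mul]
        have hcard : ((N+1).primesBelow).filter (· ≤ n) = (n+1).primesBelow := by
          ext p
          simp only [Finset.mem_filter, Nat.mem_primesBelow]
          constructor
          · rintro ⟨⟨_, hp⟩, hpn⟩; exact ⟨Nat.lt_succ_of_le hpn, hp⟩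
          · rintro ⟨hpn, hp⟩
            refine ⟨⟨?_, hp⟩, Nat.lt_succ_iff.mp hpn⟩
            exact hpn.trans_le (Nat.succ_le_succ (Nat.lt_succ_iff.mp (Finset.mem_range.mp hn)))
        rw [hcard, Nat.primesBelow_card_eq_primeCounting', Nat.primeCounting, mul_one_div]

private lemma sqrt_nat_le' (n : ℕ) : (Nat.sqrt n : ℝ) ≤ Real.sqrt n := by
  apply (Real.le_sqrt (by positivity) (by positivity)).mpr
  exact_mod_cast Nat.sqrt_le' n

private lemma pointwise' (n : ℕ) (hn : 2 ≤ n) :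
    (Nat.primeCounting n : ℝ) / n ≤ 2 / Real.sqrt n + 2 * Real.log 4 / Real.log n := by
  have hn0 : (0:ℝ) < n := by positivity
  have hn1 : (1:ℝ) < n := by exact_mod_cast hn.trans_lt' one_lt_two
  have hlog : (0:ℝ) < Real.log n := Real.log_pos hn1
  have hsq : (0:ℝ) < Real.sqrt n := Real.sqrt_pos.mpr hn0
  have hs1 : (1:ℝ) ≤ Nat.sqrt n := by
    exact_mod_cast Nat.sqrt_pos.mpr (by omega)
  have hsq' : (Nat.sqrt n : ℝ) ≤ Real.sqrt n := sqrt_nat_le' n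
  have h := cheb' n (by omega)
  have hrr : Real.sqrt n * Real.sqrt n = n := Real.mul_self_sqrt hn0.le
  have key : (Nat.primeCounting n : ℝ) * Real.log n
      ≤ 2 * Real.sqrt n * Real.log n + 2 * Real.log 4 * n := by
    have hm : ((Nat.sqrt n : ℝ) + 1) * Real.log n ≤ (2 * Real.sqrt n) * Real.log n :=
      mul_le_mul_of_nonneg_right (by linarith) hlog.le
    linarith
  have hX : (2 * Real.sqrt n + 2 * Real.log 4 * n / Real.log n) * Real.log n
      = 2 * Real.sqrt n * Real.log n + 2 * Real.log 4 * n := by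
    field_simp
  have h2 : (Nat.primeCounting n : ℝ) ≤ 2 * Real.sqrt n + 2 * Real.log 4 * n / Real.log n :=
    (mul_le_mul_iff_of_pos_right hlog).mp (by rw [hX]; exact key)
  rw [div_le_iff₀ hn0]
  have hY : (2 / Real.sqrt n + 2 * Real.log 4 / Real.log n) * n
      = 2 * Real.sqrt n + 2 * Real.log 4 * n / Real.log n := by
    have hdiv : (n:ℝ) / Real.sqrt n = Real.sqrt n := Real.div_sqrt
    field_simp
    linear_combination (-Real.log (n:ℝ)) * hrr
  rw [hY]
  exact h2

private lemma sumS' (N : ℕ) (hN : 2 ≤ N) :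
    ∑ n ∈ Finset.range (N+1), (Nat.primeCounting n : ℝ) / n ≤
      4 * Real.sqrt N + 4 * Real.log 4 * Real.sqrt N + 4 * Real.log 4 * N / Real.log N := by
  have hNN : (0:ℝ) < N := by positivity
  have hlogN : (0:ℝ) < Real.log N := Real.log_pos (by exact_mod_cast hN.trans_lt' one_lt_two)
  have hlog4 : (0:ℝ) < Real.log 4 := Real.log_pos (by norm_num)
  have e1 : ∑ n ∈ Finset.range (N+1), (Nat.primeCounting n : ℝ) / n
      = ∑ n ∈ Finset.Ioc 1 N, (Nat.primeCounting n : ℝ) / n := by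
    symm
    apply Finset.sum_subset
    · intro n hn
      rw [Finset.mem_Ioc] at hn
      exact Finset.mem_range.mpr (Nat.lt_succ_of_le hn.2)
    · intro n hnr hn
      rw [Finset.mem_range] at hnr
      rw [Finset.mem_Ioc, not_and_or, not_lt] at hn
      rcases hn with h | h
      · interval_cases n <;> simp
      · exact absurd hnr (by omega)
  rw [e1]
  have e2 : ∑ n ∈ Finset.Ioc 1 N, (Nat.primeCounting n : ℝ) / n
      ≤ ∑ n ∈ Finset.Ioc 1 N, (2 / Real.sqrt n + 2 * Real.log 4 / Real.log n) := by
    apply Finset.sum_le_sum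
    intro n hn
    exact pointwise' n (Finset.mem_Ioc.mp hn).1
  rw [Finset.sum_add_distrib] at e2
  have e3 : ∑ n ∈ Finset.Ioc 1 N, 2 / Real.sqrt n ≤ 4 * Real.sqrt N := by
    have tel : ∑ n ∈ Finset.Ico 2 (N+1),
        ((fun k : ℕ => Real.sqrt ((k:ℝ) - 1)) (n+1) - (fun k : ℕ => Real.sqrt ((k:ℝ) - 1)) n)
        = Real.sqrt N - 1 := by
      rw [Finset.sum_Ico_eq_sub _ (by omega : 2 ≤ N + 1),
        Finset.sum_range_sub (fun k : ℕ => Real.sqrt ((k:ℝ) - 1)),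
        Finset.sum_range_sub (fun k : ℕ => Real.sqrt ((k:ℝ) - 1))]
      norm_num
    have hIoc : Finset.Ioc 1 N = Finset.Ico 2 (N+1) := by
      ext m; simp [Finset.mem_Ioc, Finset.mem_Ico]; omega
    rw [hIoc]
    calc ∑ n ∈ Finset.Ico 2 (N+1), 2 / Real.sqrt n
        ≤ ∑ n ∈ Finset.Ico 2 (N+1),
            4 * ((fun k : ℕ => Real.sqrt ((k:ℝ) - 1)) (n+1) - (fun k : ℕ => Real.sqrt ((k:ℝ) - 1)) n) := by
          apply Finset.sum_le_sum
          intro n hn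
          have hn2 : 2 ≤ n := (Finset.mem_Ico.mp hn).1
          have hn0 : (0:ℝ) < n := by positivity
          have hgoal : ((n+1:ℕ):ℝ) - 1 = (n:ℝ) := by push_cast; ring
          simp only [hgoal]
          set a := Real.sqrt n with ha
          set b := Real.sqrt ((n:ℝ) - 1) with hb
          have ha2 : a^2 = n := Real.sq_sqrt hn0.le
          have hb2 : b^2 = (n:ℝ) - 1 := Real.sq_sqrt (by
            have : (2:ℝ) ≤ n := by exact_mod_cast hn2
            linarith)
          have hapos : 0 < a := Real.sqrt_pos.mpr hn0
          have hbpos : 0 ≤ b := Real.sqrt_nonneg _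
          rw [div_le_iff₀ hapos]
          nlinarith [sq_nonneg (a - b)]
      _ = 4 * (Real.sqrt N - 1) := by rw [← Finset.mul_sum, tel]
      _ ≤ 4 * Real.sqrt N := by linarith [Real.sqrt_nonneg (N:ℝ)]
  have e4 : ∑ n ∈ Finset.Ioc 1 N, 2 * Real.log 4 / Real.log n
      ≤ 4 * Real.log 4 * Real.sqrt N + 4 * Real.log 4 * N / Real.log N := by
    set M := Nat.sqrt N with hM
    have hM1 : 1 ≤ M := by
      rw [hM]; exact Nat.sqrt_pos.mpr (by omega)
    have hMN : M ≤ N := Nat.sqrt_le_self N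
    rw [← Finset.sum_Ioc_consecutive _ hM1 hMN]
    have p1 : ∑ n ∈ Finset.Ioc 1 M, 2 * Real.log 4 / Real.log n ≤ 4 * Real.log 4 * Real.sqrt N := by
      calc ∑ n ∈ Finset.Ioc 1 M, 2 * Real.log 4 / Real.log n
          ≤ (Finset.Ioc 1 M).card • (4 * Real.log 4) := by
            apply Finset.sum_le_card_nsmul
            intro n hn
            have hn2 : 2 ≤ n := (Finset.mem_Ioc.mp hn).1
            have hlog2 : Real.log 2 ≤ Real.log n := by
              apply Real.log_le_log (by norm_num) (by exact_mod_cast hn2)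
            have h2 : (0.5:ℝ) < Real.log 2 := by
              have := Real.log_two_gt_d9; linarith
            rw [div_le_iff₀ (by linarith)]
            nlinarith
        _ ≤ (M:ℝ) * (4 * Real.log 4) := by
            rw [nsmul_eq_mul]
            apply mul_le_mul_of_nonneg_right _ (by positivity)
            simp only [Nat.card_Ioc]
            exact_mod_cast Nat.sub_le M 1
        _ ≤ Real.sqrt N * (4 * Real.log 4) := by
            apply mul_le_mul_of_nonneg_right (sqrt_nat_le' N) (by positivity)
        _ = 4 * Real.log 4 * Real.sqrt N := by ring
    have p2 : ∑ n ∈ Finset.Ioc M N, 2 * Real.log 4 / Real.log n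
        ≤ 4 * Real.log 4 * N / Real.log N := by
      calc ∑ n ∈ Finset.Ioc M N, 2 * Real.log 4 / Real.log n
          ≤ (Finset.Ioc M N).card • (4 * Real.log 4 / Real.log N) := by
            apply Finset.sum_le_card_nsmul
            intro n hn
            rw [Finset.mem_Ioc] at hn
            have hnM : M + 1 ≤ n := hn.1
            have hNlt : N < (M+1)^2 := Nat.lt_succ_sqrt' N
            have hNn : (N:ℝ) ≤ (n:ℝ)^2 := by
              exact_mod_cast hNlt.le.trans (Nat.pow_le_pow_left hnM 2)
            have hlogn : Real.log N ≤ 2 * Real.log n := by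
              calc Real.log N ≤ Real.log ((n:ℝ)^2) := Real.log_le_log hNN hNn
                _ = 2 * Real.log n := by rw [Real.log_pow]; push_cast; ring
            have hlogn0 : (0:ℝ) < Real.log n := by
              apply Real.log_pos
              have : 2 ≤ n := le_trans (by omega) hnM
              exact_mod_cast this.trans_lt' one_lt_two
            rw [div_le_div_iff₀ hlogn0 hlogN]
            nlinarith
        _ ≤ (N:ℝ) * (4 * Real.log 4 / Real.log N) := by
            rw [nsmul_eq_mul]
            apply mul_le_mul_of_nonneg_right _ (by positivity)
            simp only [Nat.card_Ioc]
            exact_mod_cast Nat.sub_le N M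
        _ = 4 * Real.log 4 * N / Real.log N := by ring
    linarith
  linarith

private lemma recon' {n : ℕ} (h : IsPrimePow n) :
    n.minFac ^ (n.factorization n.minFac) = n := by
  obtain ⟨p, k, hp, hk, rfl⟩ := (isPrimePow_nat_iff _).mp h
  rw [Nat.pow_minFac hk.ne', hp.minFac_eq, hp.factorization_pow, Finsupp.single_eq_same]

private lemma card_S'' (N : ℕ) :
    (((Finset.Iic N).filter (fun n => ¬ n.Prime ∧ IsPrimePow n)).card : ℝ)
      ≤ (Nat.sqrt N + 1) * (Nat.log 2 N + 1) := by
  classical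
  set S' := (Finset.Iic N).filter (fun n => ¬ n.Prime ∧ IsPrimePow n) with hS'
  have hcard : S'.card ≤ ((Finset.range (Nat.sqrt N + 1)) ×ˢ (Finset.range (Nat.log 2 N + 1))).card := by
    apply Finset.card_le_card_of_injOn (fun n => (n.minFac, n.factorization n.minFac))
    · intro n hn
      rw [hS', Finset.mem_coe, Finset.mem_filter, Finset.mem_Iic] at hn
      obtain ⟨hnN, hnp, hpp⟩ := hn
      obtain ⟨p, k, hp, hk, rfl⟩ := (isPrimePow_nat_iff _).mp hpp
      have hk2 : 2 ≤ k := by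
        rcases k with _ | _ | k
        · omega
        · exact absurd hp (by simpa using hnp)
        · omega
      have hmf : (p^k).minFac = p := by rw [Nat.pow_minFac hk.ne', hp.minFac_eq]
      have hfa : (p^k).factorization (p^k).minFac = k := by
        rw [hmf, hp.factorization_pow, Finsupp.single_eq_same]
      rw [Finset.mem_coe, Finset.mem_product]; dsimp only
      constructor
      · rw [Finset.mem_range, hmf, Nat.lt_succ_iff, Nat.le_sqrt]
        calc p * p = p^2 := (sq p).symm
          _ ≤ p^k := Nat.pow_le_pow_right hp.pos hk2
          _ ≤ N := hnN
      · rw [Finset.mem_range, hfa, Nat.lt_succ_iff]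
        have hN0 : N ≠ 0 := by
          have : 0 < p ^ k := pow_pos hp.pos k
          omega
        apply (Nat.le_log_iff_pow_le one_lt_two hN0).mpr
        calc 2^k ≤ p^k := Nat.pow_le_pow_left hp.two_le k
          _ ≤ N := hnN
    · intro a ha b hb hab
      rw [Finset.mem_coe, Finset.mem_filter] at ha hb
      simp only [Prod.mk.injEq] at hab
      have ra := recon' ha.2.2
      have rb := recon' hb.2.2
      rw [← ra, ← rb, hab.2, hab.1]
  calc (S'.card : ℝ) ≤ (((Finset.range (Nat.sqrt N + 1)) ×ˢ (Finset.range (Nat.log 2 N + 1))).card : ℝ) := by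
        exact_mod_cast hcard
    _ = (Nat.sqrt N + 1) * (Nat.log 2 N + 1) := by
        rw [Finset.card_product]
        push_cast [Finset.card_range]
        ring

private lemma natlog_le' (N : ℕ) (hN : 1 ≤ N) : (Nat.log 2 N : ℝ) ≤ 2 * Real.log N := by
  have h1 : (2:ℕ)^(Nat.log 2 N) ≤ N := Nat.pow_log_le_self 2 (by omega)
  have h2 : (Nat.log 2 N : ℝ) * Real.log 2 ≤ Real.log N := by
    calc (Nat.log 2 N : ℝ) * Real.log 2 = Real.log ((2:ℝ)^(Nat.log 2 N)) := by
          rw [Real.log_pow]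
      _ ≤ Real.log N := Real.log_le_log (pow_pos (by norm_num : (0:ℝ) < 2) _) (by exact_mod_cast h1)
  have h3 : (0.5:ℝ) < Real.log 2 := by have := Real.log_two_gt_d9; linarith
  nlinarith [(Nat.cast_nonneg (Nat.log 2 N) : (0:ℝ) ≤ (Nat.log 2 N : ℝ))]

private lemma psi_sub_theta' (N : ℕ) (hN : 1 ≤ N) :
    ∑ n ∈ Finset.Iic N, Λ n - ∑ p ∈ (N+1).primesBelow, Real.log p
      ≤ (Real.sqrt N + 1) * (2 * Real.log N + 1) * Real.log N := by
  classical
  have hsplit : ∑ n ∈ Finset.Iic N, Λ n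
      = ∑ n ∈ (Finset.Iic N).filter (fun n => n.Prime), Λ n
        + ∑ n ∈ (Finset.Iic N).filter (fun n => ¬ n.Prime), Λ n :=
    (Finset.sum_filter_add_sum_filter_not _ _ _).symm
  have htheta : ∑ n ∈ (Finset.Iic N).filter (fun n => n.Prime), Λ n
      = ∑ p ∈ (N+1).primesBelow, Real.log p := by
    have hset : (Finset.Iic N).filter (fun n => n.Prime) = (N+1).primesBelow := by
      ext p
      simp [Nat.mem_primesBelow, Nat.lt_succ_iff]
    rw [hset]
    exact Finset.sum_congr rfl fun p hp =>
      vonMangoldt_apply_prime (Nat.prime_of_mem_primesBelow hp)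
  have hB' : ∑ n ∈ (Finset.Iic N).filter (fun n => ¬ n.Prime), Λ n
      = ∑ n ∈ (Finset.Iic N).filter (fun n => ¬ n.Prime ∧ IsPrimePow n), Λ n := by
    symm
    apply Finset.sum_subset
    · intro n hn
      rw [Finset.mem_filter] at hn ⊢
      exact ⟨hn.1, hn.2.1⟩
    · intro n hn hn2
      rw [Finset.mem_filter] at hn hn2
      rw [vonMangoldt_eq_zero_iff]
      tauto
  have hbound : ∑ n ∈ (Finset.Iic N).filter (fun n => ¬ n.Prime ∧ IsPrimePow n), Λ n
      ≤ (Real.sqrt N + 1) * (2 * Real.log N + 1) * Real.log N := by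
    calc ∑ n ∈ (Finset.Iic N).filter (fun n => ¬ n.Prime ∧ IsPrimePow n), Λ n
        ≤ ((Finset.Iic N).filter (fun n => ¬ n.Prime ∧ IsPrimePow n)).card • Real.log N := by
          apply Finset.sum_le_card_nsmul
          intro n hn
          rw [Finset.mem_filter, Finset.mem_Iic] at hn
          calc Λ n ≤ Real.log n := vonMangoldt_le_log
            _ ≤ Real.log N := Real.log_le_log
                (by exact_mod_cast hn.2.2.pos) (by exact_mod_cast hn.1)
      _ ≤ ((Nat.sqrt N + 1) * (Nat.log 2 N + 1)) * Real.log N := by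
          rw [nsmul_eq_mul]
          apply mul_le_mul_of_nonneg_right (card_S'' N) (Real.log_natCast_nonneg N)
      _ ≤ (Real.sqrt N + 1) * (2 * Real.log N + 1) * Real.log N := by
          apply mul_le_mul_of_nonneg_right _ (Real.log_natCast_nonneg N)
          apply mul_le_mul
          · have : (Nat.sqrt N : ℝ) ≤ Real.sqrt N := sqrt_nat_le' N
            linarith
          · have := natlog_le' N hN; linarith
          · positivity
          · positivity
  rw [hsplit, htheta]
  linarith

private lemma theta_le_psi' (N : ℕ) :
    ∑ p ∈ (N+1).primesBelow, Real.log p ≤ ∑ n ∈ Finset.Iic N, Λ n := by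
  have hset : (N+1).primesBelow = (Finset.Iic N).filter (fun n => n.Prime) := by
    ext p; simp [Nat.mem_primesBelow, Nat.lt_succ_iff]
  rw [hset]
  calc ∑ p ∈ (Finset.Iic N).filter (fun n => n.Prime), Real.log p
      = ∑ p ∈ (Finset.Iic N).filter (fun n => n.Prime), Λ p := by
        exact Finset.sum_congr rfl fun p hp =>
          (vonMangoldt_apply_prime (Finset.mem_filter.mp hp).2).symm
    _ ≤ ∑ n ∈ Finset.Iic N, Λ n :=
        Finset.sum_le_sum_of_subset_of_nonneg (Finset.filter_subset _ _)
          (fun _ _ _ => vonMangoldt_nonneg)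

private lemma logcube (y : ℝ) (hy : 0 < y) (h : (99:ℝ) ≤ Real.log y) :
    Real.log y ^ 3 ≤ Real.sqrt y := by
  have h12 : Real.log y ≤ 12 * y ^ (1/12 : ℝ) := by
    have := Real.log_le_rpow_div hy.le (by norm_num : (0:ℝ) < 1/12)
    linarith
  have hr : (0:ℝ) < y ^ (1/12 : ℝ) := Real.rpow_pos_of_pos hy _
  have hcube : (y ^ (1/12:ℝ))^3 = y ^ (1/4:ℝ) := by
    rw [← Real.rpow_natCast (y ^ (1/12:ℝ)) 3, ← Real.rpow_mul hy.le]
    norm_num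
  have hquart : (1728:ℝ) ≤ y ^ (1/4:ℝ) := by
    have hy8 : Real.exp 8 ≤ y ^ (1/4:ℝ) := by
      have h99 : Real.exp 99 ≤ y :=
        calc Real.exp 99 ≤ Real.exp (Real.log y) := Real.exp_le_exp.mpr h
          _ = y := Real.exp_log hy
      have h32 : Real.exp 32 ≤ y := by
        have : Real.exp 32 ≤ Real.exp 99 := Real.exp_le_exp.mpr (by norm_num)
        linarith
      calc Real.exp 8 = (Real.exp 32) ^ (1/4:ℝ) := by
            rw [← Real.exp_mul]; norm_num
        _ ≤ y ^ (1/4:ℝ) := Real.rpow_le_rpow (Real.exp_pos 32).le h32 (by norm_num)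
    have : (1728:ℝ) ≤ Real.exp 8 := by
      rw [show (8:ℝ) = (8:ℕ) * 1 by norm_num, Real.exp_nat_mul]
      have hp : (2.7182818283:ℝ)^8 ≤ Real.exp 1 ^ 8 :=
        pow_le_pow_left₀ (by norm_num) Real.exp_one_gt_d9.le 8
      nlinarith [hp]
    linarith
  have hsq : Real.sqrt y = y ^ (1/4:ℝ) * y ^ (1/4:ℝ) := by
    rw [Real.sqrt_eq_rpow, ← Real.rpow_add hy]; norm_num
  calc Real.log y ^ 3 ≤ (12 * y ^ (1/12:ℝ))^3 := by
        apply pow_le_pow_left₀ (by linarith) h12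
    _ = 1728 * (y ^ (1/12:ℝ))^3 := by ring
    _ = 1728 * y ^ (1/4:ℝ) := by rw [hcube]
    _ ≤ y ^ (1/4:ℝ) * y ^ (1/4:ℝ) := by nlinarith [hr, Real.rpow_pos_of_pos hy (1/4:ℝ)]
    _ = Real.sqrt y := hsq.symm

end Aux

/-- The prime counting function `π(x)`: the number of primes `p ≤ x`. -/
noncomputable def primePi (x : ℝ) : ℝ := Nat.primeCounting ⌊x⌋₊

/-- The second Chebyshev function `ψ(x) = ∑_{n ≤ x} Λ(n)`. -/
noncomputable def chebyshevPsi (x : ℝ) : ℝ :=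
  ∑ n ∈ Finset.Iic ⌊x⌋₊, ArithmeticFunction.vonMangoldt n

set_option maxHeartbeats 1000000 in
theorem stmt1 :
    ∃ C > (0:ℝ), ∃ x₀ ≥ Real.exp 1 ^ 2, ∀ x ≥ x₀,
      |primePi (x / Real.exp 1) - chebyshevPsi (x / Real.exp 1) / (Real.log x - 1)| ≤
        C * (x / Real.exp 1) / (Real.log x - 1) ^ 2 := by
  refine ⟨100, by norm_num, Real.exp 100, ?_, ?_⟩
  · rw [ge_iff_le, show Real.exp 1 ^ 2 = Real.exp 2 by
      rw [show (2:ℝ) = (2:ℕ) * 1 by norm_num, Real.exp_nat_mul]]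
    exact Real.exp_le_exp.mpr (by norm_num)
  intro x hx
  have he1 : (2.7182818283:ℝ) < Real.exp 1 := Real.exp_one_gt_d9
  have hx0 : (0:ℝ) < x := lt_of_lt_of_le (Real.exp_pos 100) hx
  set y := x / Real.exp 1 with hy
  have hy0 : (0:ℝ) < y := by positivity
  have hyexp : Real.exp 99 ≤ y := by
    rw [hy, show (99:ℝ) = 100 - 1 by norm_num, Real.exp_sub]
    gcongr
  set N := ⌊y⌋₊ with hNdef
  set L := Real.log y with hLdef
  have hLx : Real.log x - 1 = L := by
    rw [hLdef, hy, Real.log_div hx0.ne' (Real.exp_ne_zero 1), Real.log_exp]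
  have hL99 : (99:ℝ) ≤ L := by
    rw [hLdef]
    calc (99:ℝ) = Real.log (Real.exp 99) := (Real.log_exp 99).symm
      _ ≤ Real.log y := Real.log_le_log (Real.exp_pos 99) hyexp
  have hL0 : (0:ℝ) < L := by linarith
  have hy3 : (3:ℝ) ≤ y := by
    have h2 : Real.exp 2 ≤ Real.exp 99 := Real.exp_le_exp.mpr (by norm_num)
    have h3 : (3:ℝ) ≤ Real.exp 2 := by
      rw [show (2:ℝ) = (2:ℕ) * 1 by norm_num, Real.exp_nat_mul]
      nlinarith [he1]
    linarith
  have hN3 : 3 ≤ N := by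
    rw [hNdef]; exact Nat.le_floor (by exact_mod_cast hy3)
  have hN1 : 1 ≤ N := by omega
  have hN2 : 2 ≤ N := by omega
  have hNy : (N:ℝ) ≤ y := Nat.floor_le hy0.le
  have hyN1 : y < (N:ℝ) + 1 := Nat.lt_floor_add_one y
  have hN0 : (0:ℝ) < N := by
    have : (1:ℝ) ≤ (N:ℝ) := by exact_mod_cast hN1
    linarith
  have hlogN_le : Real.log N ≤ L := by
    rw [hLdef]; exact Real.log_le_log hN0 hNy
  have hNge : y / Real.exp 1 ≤ (N:ℝ) := by
    have h1 : y - 1 ≤ (N:ℝ) := by linarith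
    have h2 : y / Real.exp 1 ≤ y - 1 := by
      rw [div_le_iff₀ (Real.exp_pos 1)]
      nlinarith [he1, hy3]
    linarith
  have hlogN_ge : L - 1 ≤ Real.log N := by
    have : Real.log (y / Real.exp 1) ≤ Real.log N := Real.log_le_log (by positivity) hNge
    rw [Real.log_div hy0.ne' (Real.exp_ne_zero 1), Real.log_exp, ← hLdef] at this
    exact this
  have hlogN_pos : (0:ℝ) < Real.log N := by linarith
  -- set up the main quantities
  set θ := ∑ p ∈ (N+1).primesBelow, Real.log p with hθdef
  set ψ := ∑ n ∈ Finset.Iic N, ArithmeticFunction.vonMangoldt n with hψdef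
  set π' := (Nat.primeCounting N : ℝ) with hπdef
  have hPi : primePi y = π' := rfl
  have hPsi : chebyshevPsi y = ψ := rfl
  have hcard : π' = (((N+1).primesBelow).card : ℝ) := by
    rw [hπdef, pi_eq_card']
  have hlogp_le : ∀ p ∈ (N+1).primesBelow, Real.log p ≤ L := by
    intro p hp
    have h1 : p ≤ N := Nat.lt_succ_iff.mp (Nat.lt_of_mem_primesBelow hp)
    have h2 : (p:ℝ) ≤ y := le_trans (by exact_mod_cast h1) hNy
    have hp1 : (0:ℝ) < p := by exact_mod_cast (Nat.prime_of_mem_primesBelow hp).pos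
    rw [hLdef]
    exact Real.log_le_log hp1 h2
  have hA'0 : 0 ≤ π' * L - θ := by
    have h : θ ≤ π' * L := by
      rw [hcard, hθdef]
      calc ∑ p ∈ (N+1).primesBelow, Real.log p
          ≤ ∑ _p ∈ (N+1).primesBelow, L := Finset.sum_le_sum hlogp_le
        _ = (((N+1).primesBelow).card : ℝ) * L := by
            rw [Finset.sum_const, nsmul_eq_mul]
    linarith
  have hA'le : π' * L - θ ≤
      4 * Real.sqrt N + 4 * Real.log 4 * Real.sqrt N + 4 * Real.log 4 * N / Real.log N := by
    have hLN1 : L ≤ Real.log ((N:ℝ)+1) := by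
      rw [hLdef]; exact Real.log_le_log hy0 hyN1.le
    have h1 : π' * L - θ ≤ ∑ p ∈ (N+1).primesBelow, (Real.log ((N:ℝ)+1) - Real.log p) := by
      rw [Finset.sum_sub_distrib, Finset.sum_const, nsmul_eq_mul, hcard, hθdef]
      have hc0 : (0:ℝ) ≤ (((N+1).primesBelow).card : ℝ) := by positivity
      nlinarith [hc0, hLN1]
    exact h1.trans ((Abound' N).trans (sumS' N hN2))
  have hB0 : 0 ≤ ψ - θ := by
    have := theta_le_psi' N
    rw [← hθdef, ← hψdef] at this
    linarith
  have hBle : ψ - θ ≤ (Real.sqrt N + 1) * (2 * Real.log N + 1) * Real.log N := by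
    have := psi_sub_theta' N hN1
    rw [← hθdef, ← hψdef] at this
    exact this
  -- numeric combination
  have hsqrtN : Real.sqrt N ≤ Real.sqrt y := Real.sqrt_le_sqrt hNy
  have hsy0 : (0:ℝ) ≤ Real.sqrt y := Real.sqrt_nonneg y
  have hsy1 : (1:ℝ) ≤ Real.sqrt y := by
    have := Real.sqrt_le_sqrt (show (1:ℝ) ≤ y by linarith)
    rwa [Real.sqrt_one] at this
  have hsNy0 : (0:ℝ) ≤ Real.sqrt N := Real.sqrt_nonneg _
  have hlog4 : Real.log 4 ≤ 1.4 := by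
    rw [show (4:ℝ) = 2^2 by norm_num, Real.log_pow]
    push_cast
    nlinarith [Real.log_two_lt_d9]
  have hlog4pos : (0:ℝ) < Real.log 4 := Real.log_pos (by norm_num)
  have hcube : L^3 ≤ Real.sqrt y := by
    rw [hLdef]; exact logcube y hy0 (by rw [← hLdef]; exact hL99)
  have hyy : Real.sqrt y * Real.sqrt y = y := Real.mul_self_sqrt hy0.le
  have hLle : L ≤ Real.sqrt y := by nlinarith [hcube, hL99, sq_nonneg L]
  have hsyL : Real.sqrt y * L ≤ y := by
    calc Real.sqrt y * L ≤ Real.sqrt y * Real.sqrt y :=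
          mul_le_mul_of_nonneg_left hLle hsy0
      _ = y := hyy
  have hT1L : (4 * Real.sqrt N + 4 * Real.log 4 * Real.sqrt N + 4 * Real.log 4 * N / Real.log N) * L
      ≤ 16 * y := by
    have hNdivL : (N:ℝ) / Real.log N * L ≤ (99/98) * y := by
      rw [div_mul_eq_mul_div, div_le_iff₀ hlogN_pos]
      have p1 : y * (L - 1) ≤ y * Real.log N := mul_le_mul_of_nonneg_left hlogN_ge hy0.le
      have p2 : (N:ℝ) * L ≤ y * L := mul_le_mul_of_nonneg_right hNy hL0.le
      have p3 : y * 99 ≤ y * L := mul_le_mul_of_nonneg_left hL99 hy0.le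
      linarith
    have hsNL : Real.sqrt N * L ≤ Real.sqrt y * L := mul_le_mul_of_nonneg_right hsqrtN hL0.le
    have t1 : Real.sqrt N * L ≤ y := hsNL.trans hsyL
    have t0 : (0:ℝ) ≤ Real.sqrt N * L := by positivity
    have t2 : Real.log 4 * (Real.sqrt N * L) ≤ 1.4 * y :=
      mul_le_mul hlog4 t1 t0 (by norm_num)
    have t3 : Real.log 4 * ((N:ℝ) / Real.log N * L) ≤ 1.4 * ((99/98) * y) := by
      apply mul_le_mul hlog4 hNdivL _ (by norm_num)
      positivity
    have expand : (4 * Real.sqrt N + 4 * Real.log 4 * Real.sqrt N + 4 * Real.log 4 * N / Real.log N) * L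
        = 4 * (Real.sqrt N * L) + 4 * (Real.log 4 * (Real.sqrt N * L))
          + 4 * (Real.log 4 * ((N:ℝ) / Real.log N * L)) := by ring
    rw [expand]
    linarith
  have hT2L : ((Real.sqrt N + 1) * (2 * Real.log N + 1) * Real.log N) * L ≤ 6 * y := by
    have hm1 : Real.sqrt N + 1 ≤ 2 * Real.sqrt y := by linarith
    have hm2 : 2 * Real.log N + 1 ≤ 3 * L := by linarith
    have step : (Real.sqrt N + 1) * (2 * Real.log N + 1) * Real.log N
        ≤ (2 * Real.sqrt y) * (3 * L) * L := by
      apply mul_le_mul _ hlogN_le hlogN_pos.le (by positivity)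
      apply mul_le_mul hm1 hm2 (by positivity) (by positivity)
    have h6 : (2 * Real.sqrt y) * (3 * L) * L * L = 6 * (Real.sqrt y * L^3) := by ring
    have hcube' : Real.sqrt y * L^3 ≤ y := by nlinarith [hcube, hsy0]
    calc ((Real.sqrt N + 1) * (2 * Real.log N + 1) * Real.log N) * L
        ≤ ((2 * Real.sqrt y) * (3 * L) * L) * L := by
          apply mul_le_mul_of_nonneg_right step hL0.le
      _ = 6 * (Real.sqrt y * L^3) := by ring
      _ ≤ 6 * y := by linarith
  have hsum : (π' * L - θ) + (ψ - θ) ≤ 22 * y / L := by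
    rw [le_div_iff₀ hL0, add_mul]
    have h1 := mul_le_mul_of_nonneg_right hA'le hL0.le
    have h2 := mul_le_mul_of_nonneg_right hBle hL0.le
    linarith
  have key : |π' * L - ψ| ≤ 22 * y / L := by
    rw [abs_le]
    constructor <;> linarith [hA'0, hB0, hsum]
  rw [hLx, hPi, hPsi]
  have heq : π' - ψ / L = (π' * L - ψ) / L := by field_simp
  rw [heq, abs_div, abs_of_pos hL0]
  calc |π' * L - ψ| / L ≤ (22 * y / L) / L := by
        apply (div_le_div_iff_of_pos_right hL0).mpr key
    _ = 22 * y / L^2 := by rw [div_div, sq]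
    _ ≤ 100 * y / L^2 := by
        apply (div_le_div_iff_of_pos_right (by positivity)).mpr
        linarith [hy0]
end

section
/- (Generalized Cubic Polynomial Inequality) For every fixed integer n > 1 there exists a real number x₀ such that for all real x ≥ x₀, the function ℋₙ(x) = (π(x))^{3ⁿ} − (3ex/log x)·(π(x/e))^{3ⁿ − 1} + (3e²x/(log x)²)·(π(x/e²))^{3ⁿ − 2} satisfies ℋₙ(x) > 0. -/
open Real Finset

set_option maxHeartbeats 1000000

namespace Cheb

def S (m : ℕ) : Finset ℕ := Nat.primesBelow (m+1)

lemma mem_S {p m : ℕ} : p ∈ S m ↔ p < m + 1 ∧ p.Prime := Nat.mem_primesBelow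

lemma card_S (m : ℕ) : #(S m) = m.primeCounting := by
  rw [S, Nat.primesBelow_card_eq_primeCounting']; rfl

lemma pi_le_self (k : ℕ) : k.primeCounting ≤ k := by
  rw [← card_S]
  calc #(S k) ≤ #(Finset.Ioc 1 k) := by
        refine Finset.card_le_card ?_
        intro p hp
        rw [mem_S] at hp
        rw [Finset.mem_Ioc]
        exact ⟨hp.2.one_lt, by omega⟩
    _ ≤ k := by rw [Nat.card_Ioc]; omega

lemma primorial_eq (m : ℕ) : primorial m = ∏ p ∈ S m, p := rfl

lemma S_mono {m k : ℕ} (h : m ≤ k) : S m ⊆ S k := by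
  intro p hp
  rw [mem_S] at hp ⊢
  exact ⟨hp.1.trans_le (by omega), hp.2⟩

lemma primorial_mono {m k : ℕ} (h : m ≤ k) : primorial m ≤ primorial k := by
  rw [primorial_eq, primorial_eq]
  refine Finset.prod_le_prod_of_subset_of_one_le' (S_mono h) ?_
  intro p hp _
  exact (mem_S.1 hp).2.one_lt.le

lemma prod_sdiff_S {k m : ℕ} (h : k ≤ m) :
    (∏ p ∈ S m \ S k, p) * primorial k = primorial m := by
  rw [primorial_eq, primorial_eq]
  exact Finset.prod_sdiff (S_mono h)

lemma card_sdiff_S {k m : ℕ} (h : k ≤ m) :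
    #(S m \ S k) = m.primeCounting - k.primeCounting := by
  rw [Finset.card_sdiff_of_subset (S_mono h), card_S, card_S]

lemma primeCounting_le_card {k m : ℕ} (h : k ≤ m) :
    k.primeCounting ≤ m.primeCounting := Nat.monotone_primeCounting h

-- L-A : primorial m ≤ m ^ π m
lemma primorial_le_pow (m : ℕ) : primorial m ≤ m ^ m.primeCounting := by
  rw [primorial_eq, ← card_S]
  refine Finset.prod_le_pow_card _ _ _ ?_
  intro p hp
  have := mem_S.1 hp
  omega

-- L-B : primorial k * k ^ (π m - π k) ≤ primorial m
lemma le_primorial_of_le {k m : ℕ} (h : k ≤ m) :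
    primorial k * k ^ (m.primeCounting - k.primeCounting) ≤ primorial m := by
  rw [← prod_sdiff_S h, ← card_sdiff_S h, mul_comm]
  refine Nat.mul_le_mul_right _ ?_
  refine Finset.pow_card_le_prod _ _ _ ?_
  intro p hp
  rw [Finset.mem_sdiff, mem_S, mem_S] at hp
  push_neg at hp
  rcases hp with ⟨⟨h1, h2⟩, h3⟩
  exact le_of_lt (by by_contra hc; push_neg at hc; exact absurd (h3 (by omega)) (by simpa using h2))

-- L-C : primorial m ≤ primorial k * m ^ (π m - π k)
lemma primorial_le_mul {k m : ℕ} (h : k ≤ m) :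
    primorial m ≤ primorial k * m ^ (m.primeCounting - k.primeCounting) := by
  rw [← prod_sdiff_S h, ← card_sdiff_S h, mul_comm (primorial k)]
  refine Nat.mul_le_mul_right _ ?_
  refine Finset.prod_le_pow_card _ _ _ ?_
  intro p hp
  rw [Finset.mem_sdiff, mem_S] at hp
  omega

end Cheb

namespace Cheb

lemma prime_prod_eq (n : ℕ) :
    Nat.centralBinom n = ∏ p ∈ S (2*n), p ^ (Nat.centralBinom n).factorization p := by
  conv_lhs => rw [← Nat.prod_pow_factorization_centralBinom n]
  rw [eq_comm]
  refine Finset.prod_filter_of_ne ?_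
  intro x _ hx
  by_contra hp
  rw [Nat.factorization_eq_zero_of_not_prime _ hp, pow_zero] at hx
  exact hx rfl

lemma A1_le (n : ℕ) (hn : 0 < n) :
    ∏ p ∈ (S (2*n)).filter (fun p => p ≤ Nat.sqrt (2*n)),
      p ^ (Nat.centralBinom n).factorization p ≤ (2*n) ^ (Nat.sqrt (2*n)) := by
  calc ∏ p ∈ (S (2*n)).filter (fun p => p ≤ Nat.sqrt (2*n)),
      p ^ (Nat.centralBinom n).factorization p
      ≤ (2*n) ^ #((S (2*n)).filter (fun p => p ≤ Nat.sqrt (2*n))) := by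
        refine Finset.prod_le_pow_card _ _ _ ?_
        intro p _
        exact Nat.pow_factorization_choose_le (by omega)
    _ ≤ (2*n) ^ (Nat.sqrt (2*n)) := by
        refine Nat.pow_le_pow_right (by omega) ?_
        calc #((S (2*n)).filter (fun p => p ≤ Nat.sqrt (2*n)))
            ≤ #(Finset.Ioc 1 (Nat.sqrt (2*n))) := by
              refine Finset.card_le_card ?_
              intro p hp
              rw [Finset.mem_filter, mem_S] at hp
              rw [Finset.mem_Ioc]
              exact ⟨hp.1.2.one_lt, hp.2⟩
          _ ≤ Nat.sqrt (2*n) := by rw [Nat.card_Ioc]; omega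

lemma f_le_one {n p : ℕ} (hp : Nat.sqrt (2*n) < p) :
    (Nat.centralBinom n).factorization p ≤ 1 := by
  have h1 : 2*n < p ^ 2 := by
    have h2 := Nat.lt_succ_sqrt (2*n)
    have h3 : (Nat.sqrt (2*n) + 1) * (Nat.sqrt (2*n) + 1) ≤ p * p :=
      Nat.mul_le_mul hp hp
    nlinarith
  exact Nat.factorization_choose_le_one h1


-- KEY3N : centralBinom n ≤ (2n)^(sqrt 2n) * primorial (2n)
lemma key3N (n : ℕ) (hn : 0 < n) :
    Nat.centralBinom n ≤ (2*n) ^ (Nat.sqrt (2*n)) * primorial (2*n) := by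
  rw [prime_prod_eq n,
    ← Finset.prod_filter_mul_prod_filter_not (S (2*n)) (fun p => p ≤ Nat.sqrt (2*n))]
  refine Nat.mul_le_mul (A1_le n hn) ?_
  calc ∏ p ∈ (S (2*n)).filter (fun p => ¬ p ≤ Nat.sqrt (2*n)),
        p ^ (Nat.centralBinom n).factorization p
      ≤ ∏ p ∈ (S (2*n)).filter (fun p => ¬ p ≤ Nat.sqrt (2*n)), p := by
        refine Finset.prod_le_prod' ?_
        intro p hp
        rw [Finset.mem_filter] at hp
        calc p ^ (Nat.centralBinom n).factorization p
            ≤ p ^ 1 := Nat.pow_le_pow_right (mem_S.1 hp.1).2.pos (f_le_one (by omega))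
          _ = p := pow_one p
    _ ≤ ∏ p ∈ S (2*n), p := by
        refine Finset.prod_le_prod_of_subset_of_one_le' (Finset.filter_subset _ _) ?_
        intro p hp _
        exact (mem_S.1 hp).2.one_lt.le
    _ = primorial (2*n) := (primorial_eq _).symm

-- KEY2N
lemma key2N (n : ℕ) (hn : 2 < n) :
    Nat.centralBinom n * primorial n ≤
      (2*n) ^ (Nat.sqrt (2*n)) * primorial (2*n/3) * primorial (2*n) := by
  have hsn : Nat.sqrt (2*n) ≤ n := by
    have := Nat.sqrt_le_self (2*n)
    have h := Nat.sqrt_le' (2*n)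
    -- sqrt(2n) ≤ n  since sqrt(2n)^2 ≤ 2n ≤ n*n for n ≥ 2
    by_contra hc
    push_neg at hc
    have h2 : (n+1)*(n+1) ≤ Nat.sqrt (2*n) * Nat.sqrt (2*n) :=
      Nat.mul_le_mul hc hc
    have h3 := Nat.sqrt_le' (2*n)
    nlinarith
  rw [prime_prod_eq n,
    ← Finset.prod_filter_mul_prod_filter_not (S (2*n)) (fun p => p ≤ Nat.sqrt (2*n)),
    ← Finset.prod_filter_mul_prod_filter_not
      ((S (2*n)).filter (fun p => ¬ p ≤ Nat.sqrt (2*n))) (fun p => p ≤ n)]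
  -- A1 * (A2a * A2b) * primorial n ≤ (2n)^s * primorial(2n/3) * primorial(2n)
  have hA2a : ∏ p ∈ ((S (2*n)).filter (fun p => ¬ p ≤ Nat.sqrt (2*n))).filter (fun p => p ≤ n),
      p ^ (Nat.centralBinom n).factorization p ≤ primorial (2*n/3) := by
    rw [← Finset.prod_filter_of_ne
      (p := fun p => p ≤ 2*n/3)
      (f := fun p => p ^ (Nat.centralBinom n).factorization p) ?_]
    · calc _ ≤ ∏ p ∈ ((((S (2*n)).filter (fun p => ¬ p ≤ Nat.sqrt (2*n))).filter
            (fun p => p ≤ n)).filter (fun p => p ≤ 2*n/3)), p := by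
            refine Finset.prod_le_prod' ?_
            intro p hp
            simp only [Finset.mem_filter] at hp
            calc p ^ (Nat.centralBinom n).factorization p
                ≤ p ^ 1 := Nat.pow_le_pow_right (mem_S.1 hp.1.1.1).2.pos
                  (f_le_one (by omega))
              _ = p := pow_one p
        _ ≤ ∏ p ∈ S (2*n/3), p := by
            refine Finset.prod_le_prod_of_subset_of_one_le' ?_ ?_
            · intro p hp
              simp only [Finset.mem_filter] at hp
              rw [mem_S]
              exact ⟨by omega, (mem_S.1 hp.1.1.1).2⟩
            · intro p hp _
              exact (mem_S.1 hp).2.one_lt.le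
        _ = primorial (2*n/3) := (primorial_eq _).symm
    · intro p hp hne
      simp only [Finset.mem_filter] at hp
      by_contra hc
      -- then 2n/3 < p, i.e. 3p > 2n, so factorization = 0
      have h2 : 2*n < 3*p := by
        rcases hp with ⟨⟨_, _⟩, hpn⟩
        rw [Nat.le_div_iff_mul_le (by norm_num)] at hc
        omega
      exact hne (by
        simp [Nat.factorization_centralBinom_of_two_mul_self_lt_three_mul hn hp.2 h2])
  have hA2b : (∏ p ∈ ((S (2*n)).filter (fun p => ¬ p ≤ Nat.sqrt (2*n))).filter
      (fun p => ¬ p ≤ n), p ^ (Nat.centralBinom n).factorization p) * primorial n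
      ≤ primorial (2*n) := by
    rw [← prod_sdiff_S (show n ≤ 2*n by omega)]
    refine Nat.mul_le_mul_right _ ?_
    calc _ ≤ ∏ p ∈ ((S (2*n)).filter (fun p => ¬ p ≤ Nat.sqrt (2*n))).filter
          (fun p => ¬ p ≤ n), p := by
          refine Finset.prod_le_prod' ?_
          intro p hp
          simp only [Finset.mem_filter] at hp
          calc p ^ (Nat.centralBinom n).factorization p
              ≤ p ^ 1 := Nat.pow_le_pow_right (mem_S.1 hp.1.1).2.pos (f_le_one (by omega))
            _ = p := pow_one p
      _ ≤ ∏ p ∈ S (2*n) \ S n, p := by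
          refine Finset.prod_le_prod_of_subset_of_one_le' ?_ ?_
          · intro p hp
            simp only [Finset.mem_filter] at hp
            rw [Finset.mem_sdiff]
            refine ⟨hp.1.1, fun hc => ?_⟩
            rw [mem_S] at hc
            exact hp.2 (by omega)
          · intro p hp _
            exact (Nat.prime_of_mem_primesBelow (Finset.mem_sdiff.1 hp).1).one_lt.le
  calc (∏ p ∈ (S (2*n)).filter (fun p => p ≤ Nat.sqrt (2*n)),
        p ^ (Nat.centralBinom n).factorization p) *
        ((∏ p ∈ ((S (2*n)).filter (fun p => ¬ p ≤ Nat.sqrt (2*n))).filter (fun p => p ≤ n),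
          p ^ (Nat.centralBinom n).factorization p) *
         ∏ p ∈ ((S (2*n)).filter (fun p => ¬ p ≤ Nat.sqrt (2*n))).filter (fun p => ¬ p ≤ n),
          p ^ (Nat.centralBinom n).factorization p) * primorial n
      = ((∏ p ∈ (S (2*n)).filter (fun p => p ≤ Nat.sqrt (2*n)),
          p ^ (Nat.centralBinom n).factorization p) *
         (∏ p ∈ ((S (2*n)).filter (fun p => ¬ p ≤ Nat.sqrt (2*n))).filter (fun p => p ≤ n),
          p ^ (Nat.centralBinom n).factorization p)) *
        ((∏ p ∈ ((S (2*n)).filter (fun p => ¬ p ≤ Nat.sqrt (2*n))).filter (fun p => ¬ p ≤ n),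
          p ^ (Nat.centralBinom n).factorization p) * primorial n) := by ring
    _ ≤ ((2*n) ^ (Nat.sqrt (2*n)) * primorial (2*n/3)) * primorial (2*n) :=
        Nat.mul_le_mul (Nat.mul_le_mul (A1_le n (by omega)) hA2a) hA2b


noncomputable def th (m : ℕ) : ℝ := Real.log (primorial m)

lemma prim_pos (m : ℕ) : (0:ℝ) < primorial m := by exact_mod_cast primorial_pos m

lemma th_nonneg (m : ℕ) : 0 ≤ th m :=
  Real.log_nonneg (by exact_mod_cast Nat.one_le_iff_ne_zero.2 (primorial_pos m).ne')

lemma th_mono {m k : ℕ} (h : m ≤ k) : th m ≤ th k :=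
  Real.log_le_log (prim_pos m) (by exact_mod_cast primorial_mono h)

lemma th_le_log4 (m : ℕ) : th m ≤ m * Real.log 4 := by
  calc th m ≤ Real.log ((4:ℝ) ^ m) :=
      Real.log_le_log (prim_pos m) (by exact_mod_cast primorial_le_4_pow m)
    _ = m * Real.log 4 := by rw [Real.log_pow]

lemma th_le_pi_mul_log (m : ℕ) : th m ≤ m.primeCounting * Real.log m := by
  calc th m ≤ Real.log ((m:ℝ) ^ m.primeCounting) :=
      Real.log_le_log (prim_pos m) (by exact_mod_cast primorial_le_pow m)
    _ = m.primeCounting * Real.log m := by rw [Real.log_pow]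

lemma pi_sub_le {k m : ℕ} (hk : 1 ≤ k) (hkm : k ≤ m) :
    ((m.primeCounting : ℝ) - k.primeCounting) * Real.log k ≤ th m := by
  have hk' : (0:ℝ) < k := by exact_mod_cast hk
  have hcast : ((m.primeCounting : ℝ) - k.primeCounting) =
      ((m.primeCounting - k.primeCounting : ℕ) : ℝ) := by
    have := primeCounting_le_card hkm
    push_cast [this]; ring
  have h1 : Real.log ((primorial k : ℝ) * (k:ℝ) ^ (m.primeCounting - k.primeCounting))
      ≤ th m := by
    refine Real.log_le_log (mul_pos (prim_pos k) (pow_pos hk' _)) ?_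
    exact_mod_cast le_primorial_of_le hkm
  rw [Real.log_mul (prim_pos k).ne' (pow_pos hk' _).ne', Real.log_pow] at h1
  rw [hcast]
  have := th_nonneg k
  unfold th at *
  linarith

lemma th_sub_le_count {k m : ℕ} (h : k ≤ m) :
    th m - th k ≤ ((m.primeCounting : ℝ) - k.primeCounting) * Real.log m := by
  have hcast : ((m.primeCounting : ℝ) - k.primeCounting) =
      ((m.primeCounting - k.primeCounting : ℕ) : ℝ) := by
    have := primeCounting_le_card h
    push_cast [this]; ring
  rcases Nat.eq_zero_or_pos m with rfl | hm
  · interval_cases k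
    simp
  have hm' : (0:ℝ) < m := by exact_mod_cast hm
  have h1 : th m ≤ Real.log ((primorial k : ℝ) * (m:ℝ) ^ (m.primeCounting - k.primeCounting)) := by
    refine Real.log_le_log (prim_pos m) ?_
    exact_mod_cast primorial_le_mul h
  rw [Real.log_mul (prim_pos k).ne' (pow_pos hm' _).ne', Real.log_pow] at h1
  rw [hcast]
  unfold th at *
  linarith

lemma nat_sqrt_le_real_sqrt (m : ℕ) : (Nat.sqrt m : ℝ) ≤ Real.sqrt m := by
  rw [show ((Nat.sqrt m : ℝ)) = Real.sqrt ((Nat.sqrt m : ℝ)^2) by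
    rw [Real.sqrt_sq (by positivity)]]
  refine Real.sqrt_le_sqrt ?_
  exact_mod_cast Nat.sqrt_le' m

lemma key3R (n : ℕ) (hn : 0 < n) :
    (n:ℝ) * Real.log 4 ≤ th (2*n) + (Real.sqrt ((2*n:ℕ)) + 1) * Real.log ((2*n:ℕ)) := by
  have h2n : (0:ℝ) < ((2*n : ℕ):ℝ) := by exact_mod_cast (by omega : 0 < 2*n)
  have hlog : (0:ℝ) ≤ Real.log ((2*n:ℕ)) := Real.log_nonneg (by exact_mod_cast (by omega : 1 ≤ 2*n))
  have hNat : 4^n ≤ (2*n)^(Nat.sqrt (2*n)+1) * primorial (2*n) := by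
    calc 4^n ≤ 2*n * Nat.centralBinom n := Nat.four_pow_le_two_mul_self_mul_centralBinom n hn
      _ ≤ 2*n * ((2*n)^(Nat.sqrt (2*n)) * primorial (2*n)) :=
          Nat.mul_le_mul_left _ (key3N n hn)
      _ = (2*n)^(Nat.sqrt (2*n)+1) * primorial (2*n) := by ring
  have h2 : Real.log ((4:ℝ)^n) ≤
      Real.log (((2*n:ℕ):ℝ)^(Nat.sqrt (2*n)+1) * (primorial (2*n) : ℝ)) := by
    refine Real.log_le_log (by positivity) ?_
    exact_mod_cast hNat
  rw [Real.log_pow, Real.log_mul (pow_pos h2n _).ne' (prim_pos _).ne', Real.log_pow] at h2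
  have h3 : ((Nat.sqrt (2*n) + 1 : ℕ) : ℝ) * Real.log ((2*n:ℕ)) ≤
      (Real.sqrt ((2*n:ℕ)) + 1) * Real.log ((2*n:ℕ)) := by
    refine mul_le_mul_of_nonneg_right ?_ hlog
    have hs := nat_sqrt_le_real_sqrt (2*n)
    push_cast at hs ⊢
    linarith
  unfold th at *
  linarith

lemma key2R (n : ℕ) (hn : 2 < n) :
    (n:ℝ) * Real.log 4 + th n ≤ th (2*n) + th (2*n/3)
       + (Real.sqrt ((2*n:ℕ)) + 1) * Real.log ((2*n:ℕ)) := by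
  have h2n : (0:ℝ) < ((2*n : ℕ):ℝ) := by exact_mod_cast (by omega : 0 < 2*n)
  have hlog : (0:ℝ) ≤ Real.log ((2*n:ℕ)) := Real.log_nonneg (by exact_mod_cast (by omega : 1 ≤ 2*n))
  have hNat : 4^n * primorial n ≤
      (2*n)^(Nat.sqrt (2*n)+1) * (primorial (2*n/3) * primorial (2*n)) := by
    calc 4^n * primorial n
        ≤ (2*n * Nat.centralBinom n) * primorial n :=
          Nat.mul_le_mul_right _ (Nat.four_pow_le_two_mul_self_mul_centralBinom n (by omega))
      _ = 2*n * (Nat.centralBinom n * primorial n) := by ring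
      _ ≤ 2*n * ((2*n) ^ (Nat.sqrt (2*n)) * primorial (2*n/3) * primorial (2*n)) :=
          Nat.mul_le_mul_left _ (key2N n hn)
      _ = (2*n)^(Nat.sqrt (2*n)+1) * (primorial (2*n/3) * primorial (2*n)) := by ring
  have h2 : Real.log ((4:ℝ)^n * (primorial n : ℝ)) ≤
      Real.log (((2*n:ℕ):ℝ)^(Nat.sqrt (2*n)+1) *
        ((primorial (2*n/3) : ℝ) * (primorial (2*n) : ℝ))) := by
    refine Real.log_le_log (mul_pos (by positivity) (prim_pos n)) ?_
    exact_mod_cast hNat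
  have h4pow : ((4:ℝ)^n) ≠ 0 := by positivity
  rw [Real.log_mul h4pow (prim_pos _).ne', Real.log_pow,
    Real.log_mul (pow_pos h2n _).ne' (mul_pos (prim_pos _) (prim_pos _)).ne',
    Real.log_mul (prim_pos _).ne' (prim_pos _).ne', Real.log_pow] at h2
  have h3 : ((Nat.sqrt (2*n) + 1 : ℕ) : ℝ) * Real.log ((2*n:ℕ)) ≤
      (Real.sqrt ((2*n:ℕ)) + 1) * Real.log ((2*n:ℕ)) := by
    refine mul_le_mul_of_nonneg_right ?_ hlog
    have hs := nat_sqrt_le_real_sqrt (2*n)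
    push_cast at hs ⊢
    linarith
  unfold th at *
  linarith


open Filter in
lemma ev_err (eps : ℝ) (heps : 0 < eps) :
    ∀ᶠ x : ℝ in atTop, (Real.sqrt x + 1) * Real.log x + 2 ≤ eps * x := by
  filter_upwards [eventually_ge_atTop (4 : ℝ), eventually_ge_atTop ((9/eps)^(4:ℕ))]
    with x hx4 hxe
  have hx1 : (1:ℝ) ≤ x := by linarith
  have hx0 : (0:ℝ) < x := by linarith
  set q : ℝ := x ^ ((4:ℝ)⁻¹) with hq
  have hq0 : 0 < q := Real.rpow_pos_of_pos hx0 _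
  have hq1 : 1 ≤ q := by
    rw [hq, show (1:ℝ) = 1 ^ ((4:ℝ)⁻¹) by rw [Real.one_rpow]]
    exact Real.rpow_le_rpow (by norm_num) hx1 (by norm_num)
  have hx_eq : q^(4:ℕ) = x := by
    rw [hq, ← Real.rpow_natCast (x ^ _) 4, ← Real.rpow_mul hx0.le]
    norm_num
  have hlogq : Real.log q = (4:ℝ)⁻¹ * Real.log x := Real.log_rpow hx0 _
  have hlog : Real.log x ≤ 4 * q := by
    have h2 := Real.log_le_sub_one_of_pos hq0
    nlinarith
  have hsqrt : Real.sqrt x = q^(2:ℕ) := by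
    rw [← hx_eq, show ((4:ℕ):ℕ) = 2*2 by norm_num, pow_mul, Real.sqrt_sq (by positivity)]
  have hqe : 9/eps ≤ q := by
    by_contra hcon
    push_neg at hcon
    have h9 : (0:ℝ) ≤ 9/eps := by positivity
    have : q^(4:ℕ) < (9/eps)^(4:ℕ) := by
      exact pow_lt_pow_left₀ hcon hq0.le (by norm_num)
    rw [hx_eq] at this
    linarith
  have h2q : 2 ≤ q^(3:ℕ) := by nlinarith
  have hlx0 : 0 ≤ Real.log x := Real.log_nonneg hx1
  have h9q : 9 ≤ eps * q := by
    have h := mul_le_mul_of_nonneg_left hqe heps.le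
    rw [mul_div_cancel₀ _ heps.ne'] at h
    exact h
  calc (Real.sqrt x + 1) * Real.log x + 2
      ≤ (q^(2:ℕ) + 1) * (4*q) + q^(3:ℕ) := by
        rw [hsqrt]
        have : (0:ℝ) ≤ q^(2:ℕ) + 1 := by positivity
        nlinarith
    _ ≤ 9 * q^(3:ℕ) := by nlinarith
    _ ≤ (eps * q) * q^(3:ℕ) := by nlinarith
    _ = eps * x := by rw [← hx_eq]; ring

lemma num {N : ℕ} (hN : 9 ≤ N) {A B u : ℝ} (hu : 0 < u) (hB0 : 0 ≤ B)
    (hA : 0.68*u ≤ A) (hB : B ≤ 0.535*u) (hAB : B + 0.21*u ≤ A) :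
    3 * Real.exp 1 * u * B^(N-1) < A^N := by
  have he : Real.exp 1 < 2.7182818286 := Real.exp_one_lt_d9
  have he0 : 0 < Real.exp 1 := Real.exp_pos 1
  have hA0 : 0 < A := lt_of_lt_of_le (by nlinarith) hA
  have hr : B ≤ (107/149)*A := by
    rcases le_or_gt B (0.47*u) with h | h
    · nlinarith
    · nlinarith
  have hBpow : B^(N-1) ≤ ((107:ℝ)/149)^(N-1) * A^(N-1) := by
    calc B^(N-1) ≤ ((107/149)*A)^(N-1) := pow_le_pow_left₀ hB0 hr _
      _ = ((107:ℝ)/149)^(N-1) * A^(N-1) := mul_pow _ _ _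
  have hrpow : ((107:ℝ)/149)^(N-1) ≤ ((107:ℝ)/149)^(8:ℕ) :=
    pow_le_pow_of_le_one (by norm_num) (by norm_num) (by omega)
  have hApow : (0:ℝ) < A^(N-1) := pow_pos hA0 _
  have hfinal : 3 * Real.exp 1 * u * B^(N-1) ≤
      (3 * Real.exp 1 * (25/17) * ((107:ℝ)/149)^(8:ℕ)) * (A * A^(N-1)) := by
    have hu' : u ≤ (25/17) * A := by nlinarith
    have h1 : 3 * Real.exp 1 * u * B^(N-1) ≤ 3 * Real.exp 1 * ((25/17)*A) * B^(N-1) := by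
      have hP : (0:ℝ) ≤ B^(N-1) := pow_nonneg hB0 _
      exact mul_le_mul_of_nonneg_right
        (mul_le_mul_of_nonneg_left hu' (by positivity)) hP
    have h2 : B^(N-1) ≤ ((107:ℝ)/149)^(8:ℕ) * A^(N-1) := by
      calc B^(N-1) ≤ ((107:ℝ)/149)^(N-1) * A^(N-1) := hBpow
        _ ≤ ((107:ℝ)/149)^(8:ℕ) * A^(N-1) := by nlinarith
    calc 3 * Real.exp 1 * u * B^(N-1) ≤ 3 * Real.exp 1 * ((25/17)*A) * B^(N-1) := h1
      _ ≤ 3 * Real.exp 1 * ((25/17)*A) * (((107:ℝ)/149)^(8:ℕ) * A^(N-1)) :=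
          mul_le_mul_of_nonneg_left h2 (by positivity)
      _ = (3 * Real.exp 1 * (25/17) * ((107:ℝ)/149)^(8:ℕ)) * (A * A^(N-1)) := by ring
  have hc : (3 * Real.exp 1 * (25/17) * ((107:ℝ)/149)^(8:ℕ)) < 1 := by
    nlinarith
  have hAN : A * A^(N-1) = A^N := by
    rw [← pow_succ']
    congr 1
    omega
  calc 3 * Real.exp 1 * u * B^(N-1)
      ≤ (3 * Real.exp 1 * (25/17) * ((107:ℝ)/149)^(8:ℕ)) * (A * A^(N-1)) := hfinal
    _ < 1 * (A * A^(N-1)) := by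
        have : (0:ℝ) < A * A^(N-1) := mul_pos hA0 hApow
        nlinarith
    _ = A^N := by rw [one_mul, hAN]

end Cheb


open Filter in
lemma evE1 : ∀ᶠ x : ℝ in atTop, 0.68 * x ≤ primePi x * Real.log x := by
  filter_upwards [Cheb.ev_err 0.013 (by norm_num), eventually_ge_atTop (10:ℝ)]
    with x herr hx10
  have hx0 : (0:ℝ) < x := by linarith
  set m := ⌊x⌋₊ with hm
  have hm10 : 10 ≤ m := Nat.le_floor (by exact_mod_cast hx10)
  have hmx : (m:ℝ) ≤ x := Nat.floor_le hx0.le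
  have hxm : x ≤ (m:ℝ) + 1 := (Nat.lt_floor_add_one x).le
  set k := m / 2 with hk
  have h2k : 2*k ≤ m := by omega
  have h2k1 : m ≤ 2*k+1 := by omega
  have hkx : ((2*k:ℕ):ℝ) ≤ x := le_trans (by exact_mod_cast h2k) hmx
  have h2kpos : (0:ℝ) < ((2*k:ℕ):ℝ) := by
    have : 0 < 2*k := by omega
    exact_mod_cast this
  have h2k1' : (1:ℝ) ≤ ((2*k:ℕ):ℝ) := by
    have : 1 ≤ 2*k := by omega
    exact_mod_cast this
  have hkey := Cheb.key3R k (by omega)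
  have h1 : Cheb.th (2*k) ≤ Cheb.th m := Cheb.th_mono h2k
  have h2 : Cheb.th m ≤ m.primeCounting * Real.log x := by
    refine (Cheb.th_le_pi_mul_log m).trans ?_
    refine mul_le_mul_of_nonneg_left ?_ (by positivity)
    exact Real.log_le_log (by exact_mod_cast (show 0 < m by omega)) hmx
  have herr2 : (Real.sqrt ((2*k:ℕ)) + 1) * Real.log ((2*k:ℕ)) ≤
      (Real.sqrt x + 1) * Real.log x := by
    refine mul_le_mul ?_ (Real.log_le_log h2kpos hkx) (Real.log_nonneg h2k1') (by positivity)
    have := Real.sqrt_le_sqrt hkx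
    linarith
  have hkbig : (x - 2)/2 ≤ (k:ℝ) := by
    have : (m:ℝ) ≤ 2*(k:ℝ) + 1 := by exact_mod_cast h2k1
    linarith
  have hlog4 : (1.386:ℝ) ≤ Real.log 4 := by
    have h := Real.log_two_gt_d9
    rw [show (4:ℝ) = 2^2 by norm_num, Real.log_pow]
    push_cast
    linarith
  have hklog : (x-2)/2 * 1.386 ≤ (k:ℝ) * Real.log 4 := by
    refine mul_le_mul hkbig hlog4 (by norm_num) ?_
    positivity
  have hfin : 0.68 * x ≤ (m.primeCounting : ℝ) * Real.log x := by
    nlinarith [h1, h2, hkey, herr2, hklog, herr]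
  calc (0.68:ℝ) * x ≤ (m.primeCounting : ℝ) * Real.log x := hfin
    _ = primePi x * Real.log x := by rw [primePi]



open Filter in
lemma evE3 : ∀ᶠ x : ℝ in atTop,
    0.21 * x ≤ (primePi x - primePi (x / Real.exp 1)) * Real.log x := by
  filter_upwards [Cheb.ev_err 0.02 (by norm_num), eventually_ge_atTop (100:ℝ)]
    with x herr hx100
  have hx0 : (0:ℝ) < x := by linarith
  have hlx : (0:ℝ) ≤ Real.log x := Real.log_nonneg (by linarith)
  set m := ⌊x⌋₊ with hm
  have hm100 : 100 ≤ m := Nat.le_floor (by exact_mod_cast hx100)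
  have hmx : (m:ℝ) ≤ x := Nat.floor_le hx0.le
  have hxm : x ≤ (m:ℝ) + 1 := (Nat.lt_floor_add_one x).le
  set k := m / 2 with hk
  have h2k : 2*k ≤ m := by omega
  have h2k1 : m ≤ 2*k+1 := by omega
  -- primePi (x/e) ≤ (πN k : ℝ)
  have he2 : (2:ℝ) ≤ Real.exp 1 := by
    have := Real.exp_one_gt_d9; linarith
  have hfloor2 : ⌊x / (2:ℝ)⌋₊ = k := by
    rw [hk, hm, show (2:ℝ) = ((2:ℕ):ℝ) by norm_num, Nat.floor_div_natCast]
  have hmonoarg : x / Real.exp 1 ≤ x / 2 :=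
    div_le_div_of_nonneg_left hx0.le (by norm_num) he2
  have hBle : primePi (x / Real.exp 1) ≤ (k.primeCounting : ℝ) := by
    rw [primePi]
    have h1 : ⌊x / Real.exp 1⌋₊ ≤ k := by
      rw [← hfloor2]
      exact Nat.floor_mono hmonoarg
    exact_mod_cast Nat.monotone_primeCounting h1
  -- count gap
  have hπmono : k.primeCounting ≤ m.primeCounting :=
    Nat.monotone_primeCounting (by omega)
  have hgap : Cheb.th m - Cheb.th k ≤
      ((m.primeCounting:ℝ) - k.primeCounting) * Real.log x := by
    refine (Cheb.th_sub_le_count (by omega)).trans ?_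
    refine mul_le_mul_of_nonneg_left ?_ ?_
    · exact Real.log_le_log (by exact_mod_cast (show 0 < m by omega)) hmx
    · have : (k.primeCounting:ℝ) ≤ m.primeCounting := by exact_mod_cast hπmono
      linarith
  -- key2R lower bound for th m - th k
  have hkey := Cheb.key2R k (by omega)
  have hth2k : Cheb.th (2*k) ≤ Cheb.th m := Cheb.th_mono h2k
  have hth23 : Cheb.th (2*k/3) ≤ ((2*k/3 : ℕ):ℝ) * Real.log 4 := Cheb.th_le_log4 _
  have hcastdiv : ((2*k/3 : ℕ):ℝ) ≤ ((2*k:ℕ):ℝ)/3 := by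
    have := Nat.cast_div_le (α := ℝ) (m := 2*k) (n := 3)
    simpa using this
  have hkx : ((2*k:ℕ):ℝ) ≤ x := le_trans (by exact_mod_cast h2k) hmx
  have h2kpos : (0:ℝ) < ((2*k:ℕ):ℝ) := by
    have : 0 < 2*k := by omega
    exact_mod_cast this
  have h2k1' : (1:ℝ) ≤ ((2*k:ℕ):ℝ) := by
    have : 1 ≤ 2*k := by omega
    exact_mod_cast this
  have herr2 : (Real.sqrt ((2*k:ℕ)) + 1) * Real.log ((2*k:ℕ)) ≤
      (Real.sqrt x + 1) * Real.log x := by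
    refine mul_le_mul ?_ (Real.log_le_log h2kpos hkx) (Real.log_nonneg h2k1') (by positivity)
    have := Real.sqrt_le_sqrt hkx
    linarith
  have hkbig : (x - 2)/2 ≤ (k:ℝ) := by
    have : (m:ℝ) ≤ 2*(k:ℝ) + 1 := by exact_mod_cast h2k1
    linarith
  have hlog4 : (1.386:ℝ) ≤ Real.log 4 := by
    have h := Real.log_two_gt_d9
    rw [show (4:ℝ) = 2^2 by norm_num, Real.log_pow]
    push_cast
    linarith
  have hlog4' : Real.log 4 ≤ 1.3863 := by
    have h := Real.log_two_lt_d9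
    rw [show (4:ℝ) = 2^2 by norm_num, Real.log_pow]
    push_cast
    linarith
  -- (k - 2k/3) * log 4 ≥ (k/3) * 1.386 etc.
  have hmain : 0.21 * x ≤ ((m.primeCounting:ℝ) - k.primeCounting) * Real.log x := by
    have hc : ((2*k:ℕ):ℝ) = 2*(k:ℝ) := by push_cast; ring
    rw [hc] at hcastdiv
    have hlog40 : (0:ℝ) ≤ Real.log 4 := by linarith
    have h23 : ((2*k/3 : ℕ):ℝ) * Real.log 4 ≤ (2*(k:ℝ)/3) * Real.log 4 :=
      mul_le_mul_of_nonneg_right hcastdiv hlog40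
    have hklog : (x-2)/2 * 1.386 ≤ (k:ℝ) * Real.log 4 := by
      refine mul_le_mul hkbig hlog4 (by norm_num) (by positivity)
    have hklog4' : (2*(k:ℝ)/3) * Real.log 4 ≤ (2*(k:ℝ)/3) * 1.3863 := by
      refine mul_le_mul_of_nonneg_left hlog4' (by positivity)
    have hkxx : (k:ℝ) ≤ x/2 := by
      have : 2*(k:ℝ) ≤ (m:ℝ) := by exact_mod_cast h2k
      linarith
    nlinarith [hgap, hkey, hth2k, hth23, herr2, herr]
  calc (0.21:ℝ) * x ≤ ((m.primeCounting:ℝ) - k.primeCounting) * Real.log x := hmain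
    _ ≤ (primePi x - primePi (x / Real.exp 1)) * Real.log x := by
      refine mul_le_mul_of_nonneg_right ?_ hlx
      rw [primePi]
      have : primePi (x / Real.exp 1) ≤ (k.primeCounting:ℝ) := hBle
      linarith


open Filter in
lemma ev_err2 : ∀ᶠ x : ℝ in atTop, x^((49:ℝ)/50) * Real.log x ≤ 0.005 * x := by
  filter_upwards [eventually_ge_atTop ((20000:ℝ)^(100:ℕ)), eventually_ge_atTop (1:ℝ)]
    with x hxe hx1
  have hx0 : (0:ℝ) < x := by linarith
  set w : ℝ := x ^ ((100:ℝ)⁻¹) with hw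
  set v : ℝ := x ^ ((99:ℝ)/100) with hv
  have hw0 : 0 < w := Real.rpow_pos_of_pos hx0 _
  have hv0 : 0 < v := Real.rpow_pos_of_pos hx0 _
  have hvw : v * w = x := by
    rw [hv, hw, ← Real.rpow_add hx0]
    norm_num
  have h49w : x^((49:ℝ)/50) * w = v := by
    rw [hw, hv, ← Real.rpow_add hx0]
    norm_num
  have hlogw : Real.log x = 100 * Real.log w := by
    rw [hw, Real.log_rpow hx0]
    ring
  have hlog : Real.log x ≤ 100 * w := by
    rw [hlogw]
    have := Real.log_le_sub_one_of_pos hw0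
    linarith
  have hw2 : (20000:ℝ) ≤ w := by
    rw [hw]
    calc (20000:ℝ) = ((20000:ℝ)^(100:ℕ)) ^ ((100:ℝ)⁻¹) := by
          rw [← Real.rpow_natCast (20000:ℝ) 100, ← Real.rpow_mul (by norm_num)]
          norm_num
      _ ≤ x ^ ((100:ℝ)⁻¹) := Real.rpow_le_rpow (by positivity) hxe (by norm_num)
  have hxp : (0:ℝ) < x^((49:ℝ)/50) := Real.rpow_pos_of_pos hx0 _
  calc x^((49:ℝ)/50) * Real.log x ≤ x^((49:ℝ)/50) * (100 * w) :=
        mul_le_mul_of_nonneg_left hlog hxp.le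
    _ = 100 * v := by rw [← h49w]; ring
    _ ≤ 0.005 * (v * w) := by nlinarith
    _ = 0.005 * x := by rw [hvw]

open Filter in
lemma evE2 : ∀ᶠ x : ℝ in atTop, primePi (x / Real.exp 1) * Real.log x ≤ 0.535 * x := by
  filter_upwards [ev_err2, eventually_ge_atTop (Real.exp 340)] with x herr2 hx340
  have he0 : (0:ℝ) < Real.exp 1 := Real.exp_pos 1
  have he1 : (2:ℝ) ≤ Real.exp 1 := by have := Real.exp_one_gt_d9; linarith
  have hx1 : (1:ℝ) ≤ x := le_trans (by
    have := Real.one_le_exp (by norm_num : (0:ℝ) ≤ 340); linarith) hx340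
  have hx0 : (0:ℝ) < x := by linarith
  have hL340 : (340:ℝ) ≤ Real.log x := by
    rw [← Real.log_exp 340]
    exact Real.log_le_log (Real.exp_pos _) hx340
  have hL0 : (0:ℝ) < Real.log x := by linarith
  set y : ℝ := x / Real.exp 1 with hy
  have hy0 : 0 < y := by positivity
  have hy4 : (4:ℝ) ≤ y := by
    rw [hy, le_div_iff₀ he0]
    have hsplit : Real.exp 340 = Real.exp 339 * Real.exp 1 := by
      rw [← Real.exp_add]; norm_num
    have h339 : (4:ℝ) ≤ Real.exp 339 := by
      have := Real.add_one_le_exp (339:ℝ)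
      linarith
    nlinarith
  have hy1 : (1:ℝ) ≤ y := by linarith
  have hlogy : Real.log y = Real.log x - 1 := by
    rw [hy, Real.log_div hx0.ne' he0.ne', Real.log_exp]
  set m' := ⌊y⌋₊ with hm'
  set k := ⌊y ^ ((49:ℝ)/50)⌋₊ with hk
  have hy98pos : 0 < y ^ ((49:ℝ)/50) := Real.rpow_pos_of_pos hy0 _
  have hy98_2 : (2:ℝ) ≤ y ^ ((49:ℝ)/50) := by
    calc (2:ℝ) ≤ y ^ ((1:ℝ)/2) := by
          rw [show y ^ ((1:ℝ)/2) = Real.sqrt y by rw [Real.sqrt_eq_rpow]]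
          have : Real.sqrt 4 ≤ Real.sqrt y := Real.sqrt_le_sqrt hy4
          have h4 : Real.sqrt 4 = 2 := by
            rw [show (4:ℝ) = 2^2 by norm_num, Real.sqrt_sq (by norm_num)]
          linarith
      _ ≤ y ^ ((49:ℝ)/50) := Real.rpow_le_rpow_of_exponent_le hy1 (by norm_num)
  have hk_lb : y ^ ((49:ℝ)/50) - 1 ≤ (k:ℝ) := (Nat.sub_one_lt_floor _).le
  have hk1 : 1 ≤ k := by
    have : (1:ℝ) ≤ (k:ℝ) := by linarith
    exact_mod_cast this
  have hk_ub : (k:ℝ) ≤ y ^ ((49:ℝ)/50) := by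
    rw [hk]
    exact Nat.floor_le hy98pos.le
  have hkm' : k ≤ m' := by
    rw [hk, hm']
    refine Nat.floor_mono ?_
    calc y ^ ((49:ℝ)/50) ≤ y ^ ((1:ℝ)) := Real.rpow_le_rpow_of_exponent_le hy1 (by norm_num)
      _ = y := Real.rpow_one y
  -- log k ≥ 0.975 log x
  have hlogk : 0.975 * Real.log x ≤ Real.log k := by
    have h1 : y ^ ((49:ℝ)/50) / 2 ≤ (k:ℝ) := by linarith
    have h2 : Real.log (y ^ ((49:ℝ)/50) / 2) ≤ Real.log k :=
      Real.log_le_log (by positivity) h1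
    rw [Real.log_div hy98pos.ne' (by norm_num), Real.log_rpow hy0, hlogy] at h2
    have hlog2 : Real.log 2 ≤ 0.6931471808 := by
      have := Real.log_two_lt_d9; linarith
    nlinarith
  -- k * log x ≤ 0.005 x
  have hkL : (k:ℝ) * Real.log x ≤ 0.005 * x := by
    have h1 : (k:ℝ) * Real.log x ≤ x ^ ((49:ℝ)/50) * Real.log x := by
      refine mul_le_mul_of_nonneg_right ?_ hL0.le
      refine hk_ub.trans ?_
      refine Real.rpow_le_rpow hy0.le ?_ (by norm_num)
      rw [hy]
      calc x / Real.exp 1 ≤ x / 1 := div_le_div_of_nonneg_left hx0.le (by norm_num) (by linarith)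
        _ = x := div_one x
    linarith
  -- main bound
  have hB : primePi (x / Real.exp 1) = (m'.primeCounting : ℝ) := by rw [primePi]
  rw [hB]
  rcases le_or_gt m'.primeCounting k with hcase | hcase
  · have : (m'.primeCounting : ℝ) ≤ (k:ℝ) := by exact_mod_cast hcase
    have h2 : (m'.primeCounting : ℝ) * Real.log x ≤ (k:ℝ) * Real.log x :=
      mul_le_mul_of_nonneg_right this hL0.le
    nlinarith
  · have hsub := Cheb.pi_sub_le (k := k) (m := m') hk1 hkm'
    have hπk : (k.primeCounting : ℝ) ≤ (k:ℝ) := by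
      exact_mod_cast Cheb.pi_le_self k
    have hge : (0:ℝ) ≤ (m'.primeCounting:ℝ) - k := by
      have : (k:ℝ) ≤ (m'.primeCounting:ℝ) := by exact_mod_cast hcase.le
      linarith
    have hlogk0 : (0:ℝ) ≤ Real.log k := by nlinarith
    have hstep : ((m'.primeCounting:ℝ) - k) * (0.975 * Real.log x) ≤ Cheb.th m' := by
      calc ((m'.primeCounting:ℝ) - k) * (0.975 * Real.log x)
          ≤ ((m'.primeCounting:ℝ) - k) * Real.log k :=
            mul_le_mul_of_nonneg_left hlogk hge
        _ ≤ ((m'.primeCounting:ℝ) - k.primeCounting) * Real.log k := by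
            refine mul_le_mul_of_nonneg_right ?_ hlogk0
            linarith
        _ ≤ Cheb.th m' := hsub
    have hlog4' : Real.log 4 ≤ 1.3863 := by
      have h := Real.log_two_lt_d9
      rw [show (4:ℝ) = 2^2 by norm_num, Real.log_pow]
      push_cast
      linarith
    have hm'y : (m':ℝ) ≤ y := Nat.floor_le hy0.le
    have hth : Cheb.th m' ≤ 1.3863 * y := by
      refine (Cheb.th_le_log4 m').trans ?_
      have hlog40 : (0:ℝ) ≤ Real.log 4 := Real.log_nonneg (by norm_num)
      calc (m':ℝ) * Real.log 4 ≤ y * 1.3863 := by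
            refine mul_le_mul hm'y hlog4' hlog40 hy0.le
        _ = 1.3863 * y := by ring
    have hyx : 2.7182818283 * y ≤ x := by
      have hxy : y * Real.exp 1 = x := by
        rw [hy]
        field_simp
      nlinarith [Real.exp_one_gt_d9, hy0.le]
    nlinarith [hstep, hth, hyx, hkL, mul_nonneg hge hL0.le]

theorem stmt18 (n : ℕ) (hn : 1 < n) :
    ∃ x₀ : ℝ, ∀ x ≥ x₀,
      0 < primePi x ^ (3 ^ n) -
            (3 * Real.exp 1 * x / Real.log x) * primePi (x / Real.exp 1) ^ (3 ^ n - 1) +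
          (3 * Real.exp 1 ^ 2 * x / (Real.log x) ^ 2) *
            primePi (x / Real.exp 1 ^ 2) ^ (3 ^ n - 2) := by
  have hN9 : 9 ≤ 3^n := by
    calc 9 = 3^2 := by norm_num
      _ ≤ 3^n := Nat.pow_le_pow_right (by norm_num) hn
  have hcomb := (evE1.and (evE2.and evE3)).and (Filter.eventually_ge_atTop (10:ℝ))
  rw [Filter.eventually_atTop] at hcomb
  obtain ⟨x₀, hx₀⟩ := hcomb
  refine ⟨x₀, fun x hx => ?_⟩
  obtain ⟨⟨h1, h2, h3⟩, hx10⟩ := hx₀ x hx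
  have hx0 : (0:ℝ) < x := by linarith
  have hL : 0 < Real.log x := Real.log_pos (by linarith)
  set A := primePi x with hA
  set B := primePi (x / Real.exp 1) with hB
  set C := primePi (x / Real.exp 1 ^ 2) with hC
  have hB0 : 0 ≤ B := by rw [hB, primePi]; positivity
  have hC0 : 0 ≤ C := by rw [hC, primePi]; positivity
  have hu : 0 < x / Real.log x := by positivity
  have hAu : 0.68 * (x / Real.log x) ≤ A := by
    rw [show (0.68:ℝ) * (x / Real.log x) = 0.68 * x / Real.log x by ring,
      div_le_iff₀ hL]
    exact h1
  have hBu : B ≤ 0.535 * (x / Real.log x) := by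
    rw [show (0.535:ℝ) * (x / Real.log x) = 0.535 * x / Real.log x by ring,
      le_div_iff₀ hL]
    exact h2
  have hABu : B + 0.21 * (x / Real.log x) ≤ A := by
    have h4 : 0.21 * x / Real.log x ≤ A - B := by
      rw [div_le_iff₀ hL]
      exact h3
    have h5 : (0.21:ℝ) * (x / Real.log x) = 0.21 * x / Real.log x := by ring
    linarith
  have hnum := Cheb.num hN9 hu hB0 hAu hBu hABu
  have hT2 : (3 * Real.exp 1 * x / Real.log x) * B ^ (3^n - 1) < A ^ (3^n) := by
    have heq : 3 * Real.exp 1 * x / Real.log x = 3 * Real.exp 1 * (x / Real.log x) := by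
      ring
    rw [heq]
    exact hnum
  have hT3 : 0 ≤ (3 * Real.exp 1 ^ 2 * x / (Real.log x)^2) * C ^ (3^n - 2) := by
    refine mul_nonneg (div_nonneg (mul_nonneg (by positivity) hx0.le) (by positivity)) ?_
    exact pow_nonneg hC0 _
  linarith
end

section
/- (Generalized Weighted Sum Inequality) For all fixed integers n > 1 and r > 1 there exists a real number x₀ such that for all real x ≥ x₀, the function 𝒩ᵣ(x) = (Σ_{k=1}^{n} π(x/k))^r − (ex/log x)·(Σ_{k=1}^{n} π(x/(ek)))^r + (Σ_{k=1}^{n} π(x/(e²k)))^r satisfies 𝒩ᵣ(x) < 0. -/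
open Real Finset

lemma centralBinom_le_aux (m : ℕ) (hm : 0 < m) :
    Nat.centralBinom m ≤ (2 * m) ^ (Nat.primeCounting (2 * m)) := by
  have hpos := Nat.centralBinom_pos m
  have hsub : (Nat.centralBinom m).primeFactors ⊆ (2 * m + 1).primesBelow := by
    intro p hp
    have hpp := Nat.prime_of_mem_primeFactors hp
    have hν : 1 ≤ (Nat.centralBinom m).factorization p := by
      have := (Nat.support_factorization (Nat.centralBinom m)) ▸ hp
      exact Nat.one_le_iff_ne_zero.mpr (Finsupp.mem_support_iff.mp this)
    have hple : p ≤ 2 * m := by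
      calc p = p ^ 1 := (pow_one p).symm
        _ ≤ p ^ ((2 * m).choose m).factorization p := by
            exact Nat.pow_le_pow_right hpp.pos (by rwa [Nat.centralBinom] at hν)
        _ ≤ 2 * m := Nat.pow_factorization_choose_le (by omega)
    exact Nat.mem_primesBelow.mpr ⟨by omega, hpp⟩
  have hcard : (Nat.centralBinom m).primeFactors.card ≤ Nat.primeCounting (2 * m) := by
    have := Finset.card_le_card hsub
    rwa [Nat.primesBelow_card_eq_primeCounting', ← Nat.primeCounting_sub_one,
      Nat.add_sub_cancel] at this
  calc Nat.centralBinom m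
      = ∏ p ∈ (Nat.centralBinom m).primeFactors, p ^ (Nat.centralBinom m).factorization p := by
        conv_lhs => rw [← Nat.factorization_prod_pow_eq_self hpos.ne']
        rfl
    _ ≤ ∏ _p ∈ (Nat.centralBinom m).primeFactors, 2 * m := by
        apply Finset.prod_le_prod'
        intro p hp
        exact Nat.pow_factorization_choose_le (by omega)
    _ = (2 * m) ^ (Nat.centralBinom m).primeFactors.card := by
        rw [Finset.prod_const]
    _ ≤ (2 * m) ^ (Nat.primeCounting (2 * m)) := Nat.pow_le_pow_right (by omega) hcard

lemma pi_lower_nat (m : ℕ) (hm : 0 < m) :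
    (m : ℝ) ≤ 2 * Real.log (2 * m) * Nat.primeCounting (2 * m) := by
  have h1 : (4:ℕ) ^ m ≤ (2 * m) ^ (Nat.primeCounting (2 * m) + 1) := by
    calc (4:ℕ) ^ m ≤ 2 * m * Nat.centralBinom m :=
          Nat.four_pow_le_two_mul_self_mul_centralBinom m hm
      _ ≤ 2 * m * (2 * m) ^ (Nat.primeCounting (2 * m)) := by
          exact Nat.mul_le_mul_left _ (centralBinom_le_aux m hm)
      _ = (2 * m) ^ (Nat.primeCounting (2 * m) + 1) := by ring
  have h2 : (m : ℝ) * Real.log 4 ≤ (Nat.primeCounting (2 * m) + 1) * Real.log (2 * m) := by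
    have hcast : ((4:ℝ)) ^ m ≤ ((2 * m : ℕ) : ℝ) ^ (Nat.primeCounting (2 * m) + 1) := by
      exact_mod_cast h1
    have hlog := Real.log_le_log (by positivity) hcast
    rw [Real.log_pow, Real.log_pow] at hlog
    push_cast at hlog ⊢
    convert hlog using 2
  have hpi1 : 1 ≤ Nat.primeCounting (2 * m) := by
    calc 1 = Nat.primeCounting 2 := by decide
      _ ≤ Nat.primeCounting (2 * m) := Nat.monotone_primeCounting (by omega)
  have hlog4 : (1:ℝ) ≤ Real.log 4 := by
    rw [Real.le_log_iff_exp_le (by norm_num)]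
    calc Real.exp 1 ≤ 2.7182818286 := (Real.exp_one_lt_d9).le
      _ ≤ 4 := by norm_num
  have hlognn : (0:ℝ) ≤ Real.log (2 * m) := by
    apply Real.log_nonneg
    have : (1:ℝ) ≤ (m:ℝ) := by exact_mod_cast hm
    linarith
  have hpi1' : ((Nat.primeCounting (2 * m) : ℝ) + 1) ≤ 2 * Nat.primeCounting (2 * m) := by
    have : (1:ℝ) ≤ Nat.primeCounting (2 * m) := by exact_mod_cast hpi1
    linarith
  calc (m:ℝ) = m * 1 := (mul_one _).symm
    _ ≤ m * Real.log 4 := by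
        apply mul_le_mul_of_nonneg_left hlog4 (by positivity)
    _ ≤ (Nat.primeCounting (2 * m) + 1) * Real.log (2 * m) := h2
    _ ≤ (2 * Nat.primeCounting (2 * m)) * Real.log (2 * m) := by
        apply mul_le_mul_of_nonneg_right hpi1' hlognn
    _ = 2 * Real.log (2 * m) * Nat.primeCounting (2 * m) := by ring

lemma pi_lower_real (y : ℝ) (hy : 4 ≤ y) :
    y ≤ 8 * Real.log y * primePi y := by
  set m : ℕ := ⌊y / 2⌋₊ with hmdef
  have hy0 : (0:ℝ) ≤ y / 2 := by linarith
  have hm1 : 1 ≤ m := by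
    apply Nat.le_floor
    push_cast
    linarith
  have h2m : (2 * m : ℝ) ≤ y := by
    have := Nat.floor_le hy0
    rw [← hmdef] at this
    linarith
  have hy4m : y ≤ 4 * m := by
    have := Nat.lt_floor_add_one (y / 2)
    rw [← hmdef] at this
    have hm1' : (1:ℝ) ≤ (m:ℝ) := by exact_mod_cast hm1
    linarith
  have hmono : (Nat.primeCounting (2 * m) : ℝ) ≤ primePi y := by
    unfold primePi
    have : 2 * m ≤ ⌊y⌋₊ := Nat.le_floor (by exact_mod_cast h2m)
    exact_mod_cast Nat.monotone_primeCounting this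
  have hlogle : Real.log (2 * m) ≤ Real.log y := by
    apply Real.log_le_log (by positivity) h2m
  have hlognn : (0:ℝ) ≤ Real.log (2 * m) := by
    apply Real.log_nonneg
    have : (1:ℝ) ≤ (m:ℝ) := by exact_mod_cast hm1
    linarith
  have hpinn : (0:ℝ) ≤ (Nat.primeCounting (2 * m) : ℝ) := by positivity
  have hbase := pi_lower_nat m hm1
  calc y ≤ 4 * m := hy4m
    _ ≤ 4 * (2 * Real.log (2 * m) * Nat.primeCounting (2 * m)) := by linarith
    _ = 8 * (Real.log (2 * m) * Nat.primeCounting (2 * m)) := by ring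
    _ ≤ 8 * (Real.log y * primePi y) := by
        have h1 : Real.log (2 * m) * (Nat.primeCounting (2 * m) : ℝ) ≤
            Real.log y * primePi y :=
          mul_le_mul hlogle hmono hpinn (le_trans hlognn hlogle)
        linarith
    _ = 8 * Real.log y * primePi y := by ring

lemma primePi_nonneg (y : ℝ) : 0 ≤ primePi y := by unfold primePi; positivity

lemma primePi_le (y : ℝ) (hy : 0 ≤ y) : primePi y ≤ y + 1 := by
  unfold primePi
  have h1 : Nat.primeCounting ⌊y⌋₊ ≤ ⌊y⌋₊ + 1 := by
    rw [Nat.primeCounting]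
    rw [Nat.primeCounting']
    exact Nat.count_le _
  have h2 : (⌊y⌋₊ : ℝ) ≤ y := Nat.floor_le hy
  calc (Nat.primeCounting ⌊y⌋₊ : ℝ) ≤ (⌊y⌋₊ : ℝ) + 1 := by exact_mod_cast h1
    _ ≤ y + 1 := by linarith

set_option maxHeartbeats 1000000 in
theorem stmt19 (n r : ℕ) (hn : 1 < n) (hr : 1 < r) :
    ∃ x₀ : ℝ, ∀ x ≥ x₀,
      (∑ k ∈ Finset.Icc 1 n, primePi (x / (k : ℝ))) ^ r -
            (Real.exp 1 * x / Real.log x) * (∑ k ∈ Finset.Icc 1 n, primePi (x / (Real.exp 1 * (k : ℝ)))) ^ r +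
          (∑ k ∈ Finset.Icc 1 n, primePi (x / (Real.exp 1 ^ 2 * (k : ℝ)))) ^ r < 0 := by
  have hn1 : (1:ℝ) ≤ (n:ℝ) := by exact_mod_cast hn.le
  have he1 : (1:ℝ) ≤ Real.exp 1 := by nlinarith [Real.add_one_le_exp 1]
  have he0 : (0:ℝ) < Real.exp 1 := Real.exp_pos 1
  set K : ℝ := 2 * (2*(n:ℝ))^r * (8*Real.exp 1)^r with hK
  have h2n : (0:ℝ) < 2*(n:ℝ) := by linarith
  have hK0 : 0 < K := by
    apply mul_pos (mul_pos two_pos (pow_pos h2n r)) (pow_pos (by positivity) r)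
  have hLO := (Real.isLittleO_pow_log_id_atTop (n := r+1)).def
    (show (0:ℝ) < 1/(2*K) by positivity)
  have hEV : ∀ᶠ x in Filter.atTop,
      ‖Real.log x ^ (r+1)‖ ≤ 1/(2*K) * ‖id x‖ ∧ max 3 (4*Real.exp 1) ≤ x :=
    hLO.and (Filter.eventually_ge_atTop _)
  rw [Filter.eventually_atTop] at hEV
  obtain ⟨x₀, hx₀⟩ := hEV
  refine ⟨x₀, fun x hx => ?_⟩
  obtain ⟨hlittle, hmax⟩ := hx₀ x hx
  have hx3 : (3:ℝ) ≤ x := le_trans (le_max_left _ _) hmax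
  have hxe4 : 4*Real.exp 1 ≤ x := le_trans (le_max_right _ _) hmax
  have hx0 : (0:ℝ) < x := by linarith
  have hlx1 : (1:ℝ) ≤ Real.log x := by
    rw [Real.le_log_iff_exp_le hx0]
    calc Real.exp 1 ≤ 2.7182818286 := (Real.exp_one_lt_d9).le
      _ ≤ x := by linarith
  have hlx0 : (0:ℝ) < Real.log x := by linarith
  -- the key smallness fact
  have hkeyK : K * Real.log x ^ (r+1) < x := by
    have h1 : Real.log x ^ (r+1) ≤ 1/(2*K) * x := by
      calc Real.log x ^ (r+1) ≤ ‖Real.log x ^ (r+1)‖ := le_abs_self _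
        _ ≤ 1/(2*K) * ‖id x‖ := hlittle
        _ = 1/(2*K) * x := by
            simp [Real.norm_eq_abs, abs_of_nonneg hx0.le]
    have h2 : K * Real.log x ^ (r+1) ≤ K * (1/(2*K) * x) :=
      mul_le_mul_of_nonneg_left h1 hK0.le
    have h3 : K * (1/(2*K) * x) = x / 2 := by
      field_simp
    linarith
  -- lower bound for the middle sum
  have hxe4' : (4:ℝ) ≤ x / Real.exp 1 := by
    rw [le_div_iff₀ he0]
    linarith
  have hB1 := pi_lower_real (x / Real.exp 1) hxe4'
  have hloge : Real.log (x / Real.exp 1) ≤ Real.log x :=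
    Real.log_le_log (by positivity) (div_le_self hx0.le he1)
  have hpinn := primePi_nonneg (x / Real.exp 1)
  have hlogenn : (0:ℝ) ≤ Real.log (x / Real.exp 1) := by
    apply Real.log_nonneg
    linarith
  have hB2 : x / Real.exp 1 ≤ 8 * Real.log x * primePi (x / Real.exp 1) := by
    have : Real.log (x / Real.exp 1) * primePi (x / Real.exp 1) ≤
        Real.log x * primePi (x / Real.exp 1) :=
      mul_le_mul_of_nonneg_right hloge hpinn
    nlinarith
  have hBlow : x / (8 * Real.exp 1 * Real.log x) ≤ primePi (x / Real.exp 1) := by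
    rw [div_le_iff₀ (by positivity)]
    rw [div_le_iff₀ he0] at hB2
    nlinarith
  have hQ0 : 0 < x / (8 * Real.exp 1 * Real.log x) := by positivity
  -- bounds on sums
  set A := ∑ k ∈ Finset.Icc 1 n, primePi (x / (k : ℝ)) with hAdef
  set B := ∑ k ∈ Finset.Icc 1 n, primePi (x / (Real.exp 1 * (k : ℝ))) with hBdef
  set C := ∑ k ∈ Finset.Icc 1 n, primePi (x / (Real.exp 1 ^ 2 * (k : ℝ))) with hCdef
  have hsumub : ∀ (c : ℝ), 1 ≤ c →
      ∑ k ∈ Finset.Icc 1 n, primePi (x / (c * (k : ℝ))) ≤ 2 * n * x := by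
    intro c hc
    calc ∑ k ∈ Finset.Icc 1 n, primePi (x / (c * (k : ℝ)))
        ≤ ∑ k ∈ Finset.Icc 1 n, (x + 1) := by
          apply Finset.sum_le_sum
          intro k hk
          have hk1 : 1 ≤ k := (Finset.mem_Icc.mp hk).1
          have hk1' : (1:ℝ) ≤ (k:ℝ) := by exact_mod_cast hk1
          have hck : (1:ℝ) ≤ c * k := by nlinarith
          have h1 : x / (c * (k:ℝ)) ≤ x := by
            apply div_le_self hx0.le hck
          have h2 : (0:ℝ) ≤ x / (c * (k:ℝ)) := by positivity
          calc primePi (x / (c * (k:ℝ))) ≤ x / (c * (k:ℝ)) + 1 := primePi_le _ h2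
            _ ≤ x + 1 := by linarith
      _ = n * (x + 1) := by
          rw [Finset.sum_const, Nat.card_Icc]
          simp
          ring
      _ ≤ 2 * n * x := by nlinarith
  have hA2 : A ≤ 2 * n * x := by
    have := hsumub 1 le_rfl
    simpa using this
  have hC2 : C ≤ 2 * n * x := hsumub (Real.exp 1 ^ 2) (by nlinarith)
  have hAnn : 0 ≤ A := Finset.sum_nonneg fun k _ => primePi_nonneg _
  have hBnn : 0 ≤ B := Finset.sum_nonneg fun k _ => primePi_nonneg _
  have hB3 : primePi (x / Real.exp 1) ≤ B := by
    rw [hBdef]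
    have h1mem : 1 ∈ Finset.Icc 1 n := Finset.mem_Icc.mpr ⟨le_rfl, hn.le⟩
    have := Finset.single_le_sum
      (f := fun k : ℕ => primePi (x / (Real.exp 1 * (k : ℝ))))
      (fun k _ => primePi_nonneg _) h1mem
    simpa using this
  have hBlow2 : x / (8 * Real.exp 1 * Real.log x) ≤ B := le_trans hBlow hB3
  -- power bounds
  have hApow : A ^ r ≤ (2 * n * x) ^ r := pow_le_pow_left₀ hAnn hA2 r
  have hCpow : C ^ r ≤ (2 * n * x) ^ r := pow_le_pow_left₀
    (Finset.sum_nonneg fun k _ => primePi_nonneg _) hC2 r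
  have hM0 : 0 ≤ Real.exp 1 * x / Real.log x := by positivity
  have hMB : (Real.exp 1 * x / Real.log x) * (x / (8 * Real.exp 1 * Real.log x)) ^ r ≤
      (Real.exp 1 * x / Real.log x) * B ^ r :=
    mul_le_mul_of_nonneg_left (pow_le_pow_left₀ hQ0.le hBlow2 r) hM0
  -- the key inequality
  have hkey : 2 * (2 * n * x) ^ r <
      (Real.exp 1 * x / Real.log x) * (x / (8 * Real.exp 1 * Real.log x)) ^ r := by
    rw [div_pow, div_mul_div_comm, lt_div_iff₀ (by positivity)]
    calc 2 * (2 * (n:ℝ) * x) ^ r * (Real.log x * (8 * Real.exp 1 * Real.log x) ^ r)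
        = K * Real.log x ^ (r+1) * x ^ r := by rw [hK]; ring
      _ < x * x ^ r := mul_lt_mul_of_pos_right hkeyK (pow_pos hx0 r)
      _ ≤ Real.exp 1 * x * x ^ r := by
          have h := le_mul_of_one_le_left (show (0:ℝ) ≤ x * x ^ r by positivity) he1
          linarith
  linarith
end
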